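/- arXiv:2308.09645 — 5 statements merged into one kernel-verified Lean document; each statement's English description precedes it below -/
import Mathlib

section
/- For any finite connected simple graph G, the damage number satisfies dmg(G) ≥ rad(G) − 1. -/
open SimpleGraph

/-!
Formalization of the game of Cops and Robber (one cop, one robber) and the damage number.

Round 0: the cop chooses a starting vertex, then the robber chooses a starting vertex.
In each subsequent round the cop moves to an adjacent vertex or passes, after which the
robber moves to an adjacent vertex or passes.  Strategies are modelled as functions of
the full history of positions (most recent first).
-/

/-- A cop strategy: an initial vertex together with a move function taking the history of
cop positions (most recent first, nonempty) and of robber positions (most recent first)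
to the cop's next position. -/
structure CopStrategy (V : Type*) where
  init : V
  move : List V → List V → V

/-- A robber strategy: an initial vertex chosen in response to the cop's initial vertex,
together with a move function taking the history of cop positions (most recent first,
including the cop's move from the current round) and of robber positions (most recent
first) to the robber's next position. -/
structure RobberStrategy (V : Type*) where
  init : V → V
  move : List V → List V → V

variable {V : Type*}

/-- A cop move function is legal for `G` if from any position it either passes or
moves along an edge of `G`. -/
def LegalCopMove (G : SimpleGraph V) (cs : List V → List V → V) : Prop :=
  ∀ (c : V) (ch rh : List V), cs (c :: ch) rh = c ∨ G.Adj c (cs (c :: ch) rh)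

/-- A robber move function is legal for `G` if from any position it either passes or
moves along an edge of `G`. -/
def LegalRobMove (G : SimpleGraph V) (rs : List V → List V → V) : Prop :=
  ∀ (r : V) (ch rh : List V), rs ch (r :: rh) = r ∨ G.Adj r (rs ch (r :: rh))

/-- A legal cop strategy: every move passes or goes along an edge. -/
def CopStrategy.Legal (G : SimpleGraph V) (CS : CopStrategy V) : Prop :=
  LegalCopMove G CS.move

/-- A legal robber strategy: every move passes or goes along an edge. -/
def RobberStrategy.Legal (G : SimpleGraph V) (RS : RobberStrategy V) : Prop :=
  LegalRobMove G RS.move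

/-- `play CS RS n = (cₙ, rₙ, earlier cop positions, earlier robber positions)`:
the state of the game after round `n`, when the cop plays `CS` and the robber plays `RS`.
In each round the cop moves first, then the robber moves. -/
def play (CS : CopStrategy V) (RS : RobberStrategy V) : ℕ → V × V × List V × List V
  | 0 => (CS.init, RS.init CS.init, [], [])
  | n + 1 =>
    let p := play CS RS n
    let c := CS.move (p.1 :: p.2.2.1) (p.2.1 :: p.2.2.2)
    let r := RS.move (c :: p.1 :: p.2.2.1) (p.2.1 :: p.2.2.2)
    (c, r, p.1 :: p.2.2.1, p.2.1 :: p.2.2.2)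

/-- The cop's position after its move in round `n`. -/
def copPos (CS : CopStrategy V) (RS : RobberStrategy V) (n : ℕ) : V := (play CS RS n).1

/-- The robber's position after its move in round `n`. -/
def robPos (CS : CopStrategy V) (RS : RobberStrategy V) (n : ℕ) : V := (play CS RS n).2.1

/-- The robber damages `v`: at the end of some round `n` the robber occupies `v`, having
never been captured up to that point (neither by moving onto the cop, nor by the cop's
move in any round up to and including round `n + 1`); it then passes or moves in
round `n + 1`, damaging `v`. -/
def Damages (CS : CopStrategy V) (RS : RobberStrategy V) (v : V) : Prop :=
  ∃ n, robPos CS RS n = v ∧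
    ∀ k ≤ n, copPos CS RS k ≠ robPos CS RS k ∧ copPos CS RS (k + 1) ≠ robPos CS RS k

/-- The set of vertices damaged by the robber during the play of `CS` against `RS`. -/
def damageSet (CS : CopStrategy V) (RS : RobberStrategy V) : Set V :=
  {v | Damages CS RS v}

/-- The damage number of `G`: the minimum over legal cop strategies of the maximum over
legal robber strategies of the number of distinct damaged vertices. -/
noncomputable def dmg (G : SimpleGraph V) : ℕ :=
  sInf { n | ∃ CS : CopStrategy V, CS.Legal G ∧
    ∀ RS : RobberStrategy V, RS.Legal G → (damageSet CS RS).ncard ≤ n }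

/-- A cop strategy passes during the first round. -/
def CopStrategy.PassesFirst (CS : CopStrategy V) : Prop :=
  ∀ r : V, CS.move [CS.init] [r] = CS.init

/-- The damage number of `G` when the cop is required to pass during the first round. -/
noncomputable def dmg' (G : SimpleGraph V) : ℕ :=
  sInf { n | ∃ CS : CopStrategy V, CS.Legal G ∧ CS.PassesFirst ∧
    ∀ RS : RobberStrategy V, RS.Legal G → (damageSet CS RS).ncard ≤ n }

/-- The eccentricity of a vertex: the maximum distance from `u` to any vertex. -/
noncomputable def ecc (G : SimpleGraph V) (u : V) : ℕ := sSup (Set.range (G.dist u))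

/-- The radius of a graph: the minimum eccentricity over all vertices. -/
noncomputable def gRadius (G : SimpleGraph V) : ℕ := sInf (Set.range (ecc G))

/-! ### Auxiliary lemmas -/

lemma aux_play_rh_length (CS : CopStrategy V) (RS : RobberStrategy V) :
    ∀ n, (play CS RS n).2.2.2.length = n
  | 0 => rfl
  | n + 1 => by
      simp [play, aux_play_rh_length CS RS n]

lemma aux_dist_getVert_le {G : SimpleGraph V} (hG : G.Connected) {a b : V} (p : G.Walk a b) :
    ∀ i, G.dist a (p.getVert i) ≤ i := by
  intro i
  induction i with
  | zero => simp [SimpleGraph.Walk.getVert_zero]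
  | succ i ih =>
    by_cases h : i < p.length
    · have hadj : G.dist (p.getVert i) (p.getVert (i + 1)) = 1 :=
        SimpleGraph.dist_eq_one_iff_adj.mpr (p.adj_getVert_succ h)
      have := hG.dist_triangle (u := a) (v := p.getVert i) (w := p.getVert (i + 1))
      omega
    · rw [p.getVert_of_length_le (by omega : p.length ≤ i + 1),
        ← p.getVert_of_length_le (le_of_not_gt h)]
      omega

lemma aux_dist_getVert_end {G : SimpleGraph V} (hG : G.Connected) {a b : V} (p : G.Walk a b)
    {i : ℕ} (hi : i ≤ p.length) : G.dist (p.getVert i) b ≤ p.length - i := by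
  have h := aux_dist_getVert_le hG p.reverse (p.length - i)
  rw [SimpleGraph.Walk.getVert_reverse, Nat.sub_sub_self hi] at h
  rwa [SimpleGraph.dist_comm]

lemma aux_cop_dist {G : SimpleGraph V} (hG : G.Connected) (CS : CopStrategy V)
    (hCS : CS.Legal G) (RS : RobberStrategy V) :
    ∀ n, G.dist CS.init (copPos CS RS n) ≤ n := by
  intro n
  induction n with
  | zero => simp [copPos, play, SimpleGraph.dist_self]
  | succ n ih =>
    have h := hCS (play CS RS n).1 (play CS RS n).2.2.1
      ((play CS RS n).2.1 :: (play CS RS n).2.2.2)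
    have hc : copPos CS RS (n + 1) = CS.move ((play CS RS n).1 :: (play CS RS n).2.2.1)
        ((play CS RS n).2.1 :: (play CS RS n).2.2.2) := rfl
    rcases h with h | h
    · rw [hc, h]; exact le_trans ih (Nat.le_succ n)
    · have hadj : G.dist (copPos CS RS n) (copPos CS RS (n + 1)) = 1 :=
        SimpleGraph.dist_eq_one_iff_adj.mpr (by rw [hc]; exact h)
      have := hG.dist_triangle (u := CS.init) (v := copPos CS RS n) (w := copPos CS RS (n + 1))
      omega

/-- For any finite connected simple graph `G`, `dmg(G) ≥ rad(G) - 1`. -/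
theorem dmg_ge_radius_sub_one {V : Type*} [Fintype V] (G : SimpleGraph V)
    (hG : G.Connected) : gRadius G - 1 ≤ dmg G := by
  classical
  have hVne : Nonempty V := hG.nonempty
  haveI : Inhabited V := Classical.inhabited_of_nonempty hVne
  apply le_csInf
  · -- the set of achievable bounds is nonempty
    refine ⟨Fintype.card V, ⟨default, fun ch _ => ch.headI⟩,
      fun c ch rh => Or.inl rfl, fun RS _ => ?_⟩
    calc (damageSet _ RS).ncard ≤ (Set.univ : Set V).ncard :=
          Set.ncard_le_ncard (Set.subset_univ _) Set.finite_univ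
      _ = Fintype.card V := by rw [Set.ncard_univ, Nat.card_eq_fintype_card]
  · rintro n ⟨CS, hCS, hbound⟩
    by_cases hrad : gRadius G ≤ 1
    · omega
    push_neg at hrad
    set c0 := CS.init with hc0
    -- a vertex at maximal distance from the cop's start
    have hrd : gRadius G ≤ ecc G c0 := Nat.sInf_le ⟨c0, rfl⟩
    obtain ⟨u, hu⟩ : ∃ u, G.dist c0 u = ecc G c0 :=
      Nat.sSup_mem (Set.range_nonempty _) ((Set.finite_range _).bddAbove)
    set d := G.dist c0 u with hd
    have hd2 : 2 ≤ d := by omega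
    obtain ⟨p, hp⟩ := hG.exists_walk_length_eq_dist c0 u
    set q : ℕ → V := fun i => p.getVert i with hq
    have hq_le : ∀ i, G.dist c0 (q i) ≤ i := fun i => aux_dist_getVert_le hG p i
    have hq_dist : ∀ i, i ≤ d → G.dist c0 (q i) = i := by
      intro i hi
      have h1 : G.dist (q i) u ≤ d - i := by
        have h0 := aux_dist_getVert_end hG p (show i ≤ p.length by rw [hp]; omega)
        rw [hp] at h0
        exact h0
      have h2 : G.dist c0 u ≤ G.dist c0 (q i) + G.dist (q i) u := hG.dist_triangle
      have h3 := hq_le i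
      omega
    -- the robber strategy: walk along the geodesic, two steps ahead of schedule
    set RS : RobberStrategy V :=
      { init := fun _ => q 2,
        move := fun _ rh =>
          match rh with
          | [] => q 0
          | r :: rh' => if r = q (rh'.length + 2) then q (rh'.length + 3) else r } with hRS
    have hRSlegal : RS.Legal G := by
      intro r ch rh
      have hmv : RS.move ch (r :: rh) =
          if r = q (rh.length + 2) then q (rh.length + 3) else r := rfl
      rw [hmv]
      by_cases hr : r = q (rh.length + 2)
      · rw [if_pos hr]
        by_cases hlen : rh.length + 2 < p.length
        · refine Or.inr ?_
          rw [hr]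
          exact p.adj_getVert_succ hlen
        · left
          rw [hr]
          show p.getVert (rh.length + 3) = p.getVert (rh.length + 2)
          rw [p.getVert_of_length_le (by omega), p.getVert_of_length_le (by omega)]
      · rw [if_neg hr]; exact Or.inl rfl
    have hrob : ∀ k, robPos CS RS k = q (k + 2) := by
      intro k
      induction k with
      | zero => rfl
      | succ k ih =>
        have hlen := aux_play_rh_length CS RS k
        have hmv : robPos CS RS (k + 1) =
            if (play CS RS k).2.1 = q ((play CS RS k).2.2.2.length + 2)
            then q ((play CS RS k).2.2.2.length + 3) else (play CS RS k).2.1 := rfl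
        have ih' : (play CS RS k).2.1 = q (k + 2) := ih
        rw [hmv, hlen, ih', if_pos rfl]
    -- safety of the robber during the first d - 2 rounds
    have hsafe : ∀ k, k ≤ d - 2 →
        copPos CS RS k ≠ robPos CS RS k ∧ copPos CS RS (k + 1) ≠ robPos CS RS k := by
      intro k hk
      have hcop1 := aux_cop_dist hG CS hCS RS k
      have hcop2 := aux_cop_dist hG CS hCS RS (k + 1)
      have hq2 : G.dist c0 (robPos CS RS k) = k + 2 := by
        rw [hrob k]; exact hq_dist (k + 2) (by omega)
      constructor
      · intro h; rw [h, hq2] at hcop1; omega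
      · intro h; rw [h, hq2] at hcop2; omega
    -- each vertex q (k+2), k ≤ d - 2, is damaged
    have hdam : ∀ k, k ≤ d - 2 → q (k + 2) ∈ damageSet CS RS := by
      intro k hk
      exact ⟨k, hrob k, fun j hj => hsafe j (le_trans hj hk)⟩
    have hsub : q '' Set.Icc 2 d ⊆ damageSet CS RS := by
      rintro v ⟨i, ⟨hi2, hid⟩, rfl⟩
      have : i = (i - 2) + 2 := by omega
      rw [this]
      exact hdam (i - 2) (by omega)
    have hinj : Set.InjOn q (Set.Icc 2 d) := by
      rintro i ⟨-, hi⟩ j ⟨-, hj⟩ hij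
      have h1 := hq_dist i hi
      have h2 := hq_dist j hj
      rw [hij] at h1
      omega
    have hcard : (q '' Set.Icc 2 d).ncard = d - 1 := by
      rw [Set.ncard_image_of_injOn hinj]
      rw [show (Set.Icc 2 d) = ↑(Finset.Icc 2 d) by simp, Set.ncard_coe_finset,
        Nat.card_Icc]
      omega
    have hle : d - 1 ≤ (damageSet CS RS).ncard := by
      rw [← hcard]
      exact Set.ncard_le_ncard hsub (Set.toFinite _)
    have := hbound RS hRSlegal
    have : gRadius G ≤ d := by omega
    omega
end

section
/- If G and H are finite simple graphs each with no isolated vertices, then the Cartesian product G □ H contains no c-dominated vertices; that is, there is no vertex (x,y) of G □ H for which a different vertex (u,v) satisfies N[(x,y)] ⊆ N[(u,v)]. -/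
open SimpleGraph

variable {V : Type*}

/-- A vertex `a` is c-dominated if some other vertex `b` satisfies `N[a] ⊆ N[b]`. -/
def CDominated (G : SimpleGraph V) (a : V) : Prop :=
  ∃ b, b ≠ a ∧ insert a (G.neighborSet a) ⊆ insert b (G.neighborSet b)

/-- If `G` and `H` are finite simple graphs with no isolated vertices, then `G □ H`
contains no c-dominated vertices. -/
theorem boxProd_no_cDominated {α β : Type*} [Fintype α] [Fintype β]
    (G : SimpleGraph α) (H : SimpleGraph β)
    (hG : ∀ a : α, ∃ a' : α, G.Adj a a') (hH : ∀ b : β, ∃ b' : β, H.Adj b b') :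
    ∀ p : α × β, ¬ CDominated (G □ H) p := by
  rintro ⟨x, y⟩ ⟨⟨u, v⟩, hne, hsub⟩
  obtain ⟨x', hx'⟩ := hG x
  obtain ⟨y', hy'⟩ := hH y
  have hself : ((x, y) : α × β) ∈ insert ((u, v) : α × β) ((G □ H).neighborSet (u, v)) :=
    hsub (Set.mem_insert _ _)
  have hadj : (G □ H).Adj (u, v) (x, y) := by
    rcases hself with h | h
    · exact absurd h.symm hne
    · exact h
  have h1 : ((x', y) : α × β) ∈ insert ((u, v) : α × β) ((G □ H).neighborSet (u, v)) :=
    hsub (Set.mem_insert_of_mem _ (by simp [SimpleGraph.boxProd_adj, hx']))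
  have h2 : ((x, y') : α × β) ∈ insert ((u, v) : α × β) ((G □ H).neighborSet (u, v)) :=
    hsub (Set.mem_insert_of_mem _ (by simp [SimpleGraph.boxProd_adj, hy']))
  rw [SimpleGraph.boxProd_adj] at hadj
  rcases hadj with ⟨hux, hvy⟩ | ⟨hvy, hux⟩
  · -- u adj x, v = y
    subst hvy
    rcases h2 with h | h
    · exact G.ne_of_adj hux (congrArg Prod.fst h).symm
    · rw [SimpleGraph.mem_neighborSet, SimpleGraph.boxProd_adj] at h
      rcases h with ⟨_, h⟩ | ⟨h, hh⟩
      · exact H.ne_of_adj hy' h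
      · exact G.ne_of_adj hux hh
  · -- v adj y, u = x
    subst hux
    rcases h1 with h | h
    · exact H.ne_of_adj hvy (congrArg Prod.snd h).symm
    · rw [SimpleGraph.mem_neighborSet, SimpleGraph.boxProd_adj] at h
      rcases h with ⟨h, hh⟩ | ⟨_, h⟩
      · exact H.ne_of_adj hvy hh
      · exact G.ne_of_adj hx' h
end

section
/- If G and H are finite connected simple graphs that both contain a universal vertex, then dmg(G □ H) ≤ min{|V(G)|, |V(H)|}. -/
open SimpleGraph

variable {V : Type*}

section DamageBound

attribute [local instance] Classical.propDecidable

/-- A "guarded" cop move function: play `f c r` (a function of the current cop and robber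
positions only) whenever that is legal, otherwise pass. -/
noncomputable def gMove (G' : SimpleGraph V) (d : V) (f : V → V → V) :
    List V → List V → V
  | c :: _, r :: _ => if f c r = c ∨ G'.Adj c (f c r) then f c r else c
  | c :: _, [] => c
  | [], _ => d

lemma gMove_legal (G' : SimpleGraph V) (d : V) (f : V → V → V) :
    LegalCopMove G' (gMove G' d f) := by
  intro c ch rh
  cases rh with
  | nil => left; rfl
  | cons r rh =>
    have he : gMove G' d f (c :: ch) (r :: rh) =
        if f c r = c ∨ G'.Adj c (f c r) then f c r else c := rfl
    rw [he]
    split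
    · next h => exact h
    · left; rfl

lemma gMove_eq (G' : SimpleGraph V) (d : V) (f : V → V → V) (c r : V)
    (ch rh : List V) (h : f c r = c ∨ G'.Adj c (f c r)) :
    gMove G' d f (c :: ch) (r :: rh) = f c r := by
  have he : gMove G' d f (c :: ch) (r :: rh) =
      if f c r = c ∨ G'.Adj c (f c r) then f c r else c := rfl
  rw [he, if_pos h]

section Shadow

variable {α β : Type*} (G : SimpleGraph α) (H : SimpleGraph β) (u : α) (v : β)

/-- Intended cop move shadowing the second coordinate. -/
noncomputable def shadowF (u : α) (c r : α × β) : α × β :=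
  if r.2 = c.2 ∨ r.1 = u then r else (u, r.2)

lemma shadowF_pos {u : α} {c r : α × β} (h : r.2 = c.2 ∨ r.1 = u) :
    shadowF u c r = r := if_pos h

lemma shadowF_neg {u : α} {c r : α × β} (h : ¬(r.2 = c.2 ∨ r.1 = u)) :
    shadowF u c r = (u, r.2) := if_neg h

/-- The cop strategy: sit at `(u, b)` where `b` shadows the robber's second coordinate;
capture when possible. -/
noncomputable def shadowCS : CopStrategy (α × β) :=
  ⟨(u, v), gMove (G □ H) (u, v) (shadowF u)⟩

lemma copPos_succ' (CS : CopStrategy (α × β)) (RS : RobberStrategy (α × β)) (n : ℕ) :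
    copPos CS RS (n + 1) =
      CS.move (copPos CS RS n :: (play CS RS n).2.2.1)
        (robPos CS RS n :: (play CS RS n).2.2.2) := rfl

lemma robPos_succ' (CS : CopStrategy (α × β)) (RS : RobberStrategy (α × β)) (n : ℕ) :
    robPos CS RS (n + 1) =
      RS.move (copPos CS RS (n + 1) :: copPos CS RS n :: (play CS RS n).2.2.1)
        (robPos CS RS n :: (play CS RS n).2.2.2) := rfl

variable (hu : ∀ w : α, w ≠ u → G.Adj u w) (hv : ∀ w : β, w ≠ v → H.Adj v w)

include hu hv in
lemma shadow_key (RS : RobberStrategy (α × β)) (hRS : RS.Legal (G □ H)) :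
    ∀ n : ℕ,
      (∀ k ≤ n, copPos (shadowCS G H u v) RS (k + 1) ≠ robPos (shadowCS G H u v) RS k) →
      copPos (shadowCS G H u v) RS (n + 1) = (u, (robPos (shadowCS G H u v) RS n).2) ∧
      (robPos (shadowCS G H u v) RS n).1 = (robPos (shadowCS G H u v) RS 0).1 ∧
      (robPos (shadowCS G H u v) RS n).1 ≠ u := by
  set CS := shadowCS G H u v with hCS
  have copstep : ∀ n : ℕ,
      (shadowF u (copPos CS RS n) (robPos CS RS n) = copPos CS RS n ∨
        (G □ H).Adj (copPos CS RS n) (shadowF u (copPos CS RS n) (robPos CS RS n))) →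
      copPos CS RS (n + 1) = shadowF u (copPos CS RS n) (robPos CS RS n) := by
    intro n h
    rw [copPos_succ']
    show gMove (G □ H) (u, v) (shadowF u) (copPos CS RS n :: (play CS RS n).2.2.1)
      (robPos CS RS n :: (play CS RS n).2.2.2) = _
    exact gMove_eq _ _ _ _ _ _ _ h
  have robstep : ∀ n : ℕ, robPos CS RS (n + 1) = robPos CS RS n ∨
      (G □ H).Adj (robPos CS RS n) (robPos CS RS (n + 1)) := by
    intro n
    rw [robPos_succ']
    exact hRS (robPos CS RS n) _ _
  -- legality of the intended move whenever the cop is at (u, y)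
  have fleg : ∀ (y : β) (r : α × β), r.2 = y ∨ H.Adj y r.2 →
      (shadowF u (u, y) r = (u, y) ∨ (G □ H).Adj (u, y) (shadowF u (u, y) r)) := by
    intro y r hy
    by_cases h1 : r.2 = y ∨ r.1 = u
    · rw [shadowF_pos h1]
      rcases h1 with h1 | h1
      · by_cases h2 : r.1 = u
        · left; ext <;> simp [h1, h2]
        · right
          rw [SimpleGraph.boxProd_adj]
          left
          exact ⟨hu r.1 h2, h1.symm⟩
      · rcases hy with hy | hy
        · left; ext <;> simp [h1, hy]
        · right
          rw [SimpleGraph.boxProd_adj]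
          right
          exact ⟨hy, h1.symm⟩
    · rw [shadowF_neg h1]
      push_neg at h1
      right
      rw [SimpleGraph.boxProd_adj]
      right
      rcases hy with hy | hy
      · exact absurd hy h1.1
      · exact ⟨hy, rfl⟩
  intro n
  induction n with
  | zero =>
    intro hcap
    have h0 : copPos CS RS 0 = (u, v) := rfl
    have hy : (robPos CS RS 0).2 = v ∨ H.Adj v (robPos CS RS 0).2 := by
      by_cases h : (robPos CS RS 0).2 = v
      · exact Or.inl h
      · exact Or.inr (hv _ h)
    have hc1 : copPos CS RS 1 = shadowF u (copPos CS RS 0) (robPos CS RS 0) :=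
      copstep 0 (by rw [h0]; exact fleg v _ hy)
    by_cases h1 : (robPos CS RS 0).2 = (copPos CS RS 0).2 ∨ (robPos CS RS 0).1 = u
    · exfalso
      apply hcap 0 le_rfl
      rw [hc1]
      exact shadowF_pos h1
    · push_neg at h1
      refine ⟨?_, rfl, h1.2⟩
      rw [hc1, shadowF_neg (by push_neg; exact h1)]
  | succ n ih =>
    intro hcap
    obtain ⟨hcop, hfst, hne⟩ := ih (fun k hk => hcap k (hk.trans (Nat.le_succ n)))
    by_cases hb : (robPos CS RS (n + 1)).2 = (robPos CS RS n).2
    · exfalso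
      apply hcap (n + 1) le_rfl
      have h1 : (robPos CS RS (n + 1)).2 = (copPos CS RS (n + 1)).2 ∨
          (robPos CS RS (n + 1)).1 = u := by
        left; rw [hcop]; exact hb
      have hy : (robPos CS RS (n + 1)).2 = (robPos CS RS n).2 ∨
          H.Adj (robPos CS RS n).2 (robPos CS RS (n + 1)).2 := Or.inl hb
      have hc2 : copPos CS RS (n + 2) =
          shadowF u (copPos CS RS (n + 1)) (robPos CS RS (n + 1)) :=
        copstep (n + 1) (by rw [hcop]; exact fleg _ _ hy)
      rw [hc2]
      exact shadowF_pos h1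
    · have hadj : H.Adj (robPos CS RS n).2 (robPos CS RS (n + 1)).2 ∧
          (robPos CS RS (n + 1)).1 = (robPos CS RS n).1 := by
        rcases robstep n with h | h
        · exact absurd (by rw [h]) hb
        · rw [SimpleGraph.boxProd_adj] at h
          rcases h with ⟨_, h2⟩ | ⟨h1, h2⟩
          · exact absurd h2.symm hb
          · exact ⟨h1, h2.symm⟩
      have hy : (robPos CS RS (n + 1)).2 = (robPos CS RS n).2 ∨
          H.Adj (robPos CS RS n).2 (robPos CS RS (n + 1)).2 := Or.inr hadj.1
      have hc2 : copPos CS RS (n + 2) =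
          shadowF u (copPos CS RS (n + 1)) (robPos CS RS (n + 1)) :=
        copstep (n + 1) (by rw [hcop]; exact fleg _ _ hy)
      have hru : (robPos CS RS (n + 1)).1 ≠ u := by rw [hadj.2]; exact hne
      refine ⟨?_, by rw [hadj.2, hfst], hru⟩
      rw [hc2, shadowF_neg ?_]
      push_neg
      refine ⟨by rw [hcop]; exact hb, hru⟩

include hu hv in
lemma shadow_damage (RS : RobberStrategy (α × β)) (hRS : RS.Legal (G □ H)) :
    damageSet (shadowCS G H u v) RS ⊆
      {p : α × β | p.1 = (robPos (shadowCS G H u v) RS 0).1} := by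
  intro p hp
  obtain ⟨n, hpn, hall⟩ := hp
  have := (shadow_key G H u v hu hv RS hRS n (fun k hk => (hall k hk).2)).2.1
  rw [hpn] at this
  exact this

end Shadow

section Shadow2

variable {α β : Type*} (G : SimpleGraph α) (H : SimpleGraph β) (u : α) (v : β)

/-- Intended cop move shadowing the first coordinate. -/
noncomputable def shadowF2 (v : β) (c r : α × β) : α × β :=
  if r.1 = c.1 ∨ r.2 = v then r else (r.1, v)

lemma shadowF2_pos {v : β} {c r : α × β} (h : r.1 = c.1 ∨ r.2 = v) :
    shadowF2 v c r = r := if_pos h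

lemma shadowF2_neg {v : β} {c r : α × β} (h : ¬(r.1 = c.1 ∨ r.2 = v)) :
    shadowF2 v c r = (r.1, v) := if_neg h

/-- The mirror cop strategy: shadow the robber's first coordinate. -/
noncomputable def shadowCS2 : CopStrategy (α × β) :=
  ⟨(u, v), gMove (G □ H) (u, v) (shadowF2 v)⟩

variable (hu : ∀ w : α, w ≠ u → G.Adj u w) (hv : ∀ w : β, w ≠ v → H.Adj v w)

include hu hv in
lemma shadow2_key (RS : RobberStrategy (α × β)) (hRS : RS.Legal (G □ H)) :
    ∀ n : ℕ,
      (∀ k ≤ n, copPos (shadowCS2 G H u v) RS (k + 1) ≠ robPos (shadowCS2 G H u v) RS k) →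
      copPos (shadowCS2 G H u v) RS (n + 1) = ((robPos (shadowCS2 G H u v) RS n).1, v) ∧
      (robPos (shadowCS2 G H u v) RS n).2 = (robPos (shadowCS2 G H u v) RS 0).2 ∧
      (robPos (shadowCS2 G H u v) RS n).2 ≠ v := by
  set CS := shadowCS2 G H u v with hCS
  have copstep : ∀ n : ℕ,
      (shadowF2 v (copPos CS RS n) (robPos CS RS n) = copPos CS RS n ∨
        (G □ H).Adj (copPos CS RS n) (shadowF2 v (copPos CS RS n) (robPos CS RS n))) →
      copPos CS RS (n + 1) = shadowF2 v (copPos CS RS n) (robPos CS RS n) := by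
    intro n h
    rw [copPos_succ']
    show gMove (G □ H) (u, v) (shadowF2 v) (copPos CS RS n :: (play CS RS n).2.2.1)
      (robPos CS RS n :: (play CS RS n).2.2.2) = _
    exact gMove_eq _ _ _ _ _ _ _ h
  have robstep : ∀ n : ℕ, robPos CS RS (n + 1) = robPos CS RS n ∨
      (G □ H).Adj (robPos CS RS n) (robPos CS RS (n + 1)) := by
    intro n
    rw [robPos_succ']
    exact hRS (robPos CS RS n) _ _
  have fleg : ∀ (y : α) (r : α × β), r.1 = y ∨ G.Adj y r.1 →
      (shadowF2 v (y, v) r = (y, v) ∨ (G □ H).Adj (y, v) (shadowF2 v (y, v) r)) := by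
    intro y r hy
    by_cases h1 : r.1 = y ∨ r.2 = v
    · rw [shadowF2_pos h1]
      rcases h1 with h1 | h1
      · by_cases h2 : r.2 = v
        · left; ext <;> simp [h1, h2]
        · right
          rw [SimpleGraph.boxProd_adj]
          right
          exact ⟨hv r.2 h2, h1.symm⟩
      · rcases hy with hy | hy
        · left; ext <;> simp [h1, hy]
        · right
          rw [SimpleGraph.boxProd_adj]
          left
          exact ⟨hy, h1.symm⟩
    · rw [shadowF2_neg h1]
      push_neg at h1
      right
      rw [SimpleGraph.boxProd_adj]
      left
      rcases hy with hy | hy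
      · exact absurd hy h1.1
      · exact ⟨hy, rfl⟩
  intro n
  induction n with
  | zero =>
    intro hcap
    have h0 : copPos CS RS 0 = (u, v) := rfl
    have hy : (robPos CS RS 0).1 = u ∨ G.Adj u (robPos CS RS 0).1 := by
      by_cases h : (robPos CS RS 0).1 = u
      · exact Or.inl h
      · exact Or.inr (hu _ h)
    have hc1 : copPos CS RS 1 = shadowF2 v (copPos CS RS 0) (robPos CS RS 0) :=
      copstep 0 (by rw [h0]; exact fleg u _ hy)
    by_cases h1 : (robPos CS RS 0).1 = (copPos CS RS 0).1 ∨ (robPos CS RS 0).2 = v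
    · exfalso
      apply hcap 0 le_rfl
      rw [hc1]
      exact shadowF2_pos h1
    · push_neg at h1
      refine ⟨?_, rfl, h1.2⟩
      rw [hc1, shadowF2_neg (by push_neg; exact h1)]
  | succ n ih =>
    intro hcap
    obtain ⟨hcop, hfst, hne⟩ := ih (fun k hk => hcap k (hk.trans (Nat.le_succ n)))
    by_cases hb : (robPos CS RS (n + 1)).1 = (robPos CS RS n).1
    · exfalso
      apply hcap (n + 1) le_rfl
      have h1 : (robPos CS RS (n + 1)).1 = (copPos CS RS (n + 1)).1 ∨
          (robPos CS RS (n + 1)).2 = v := by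
        left; rw [hcop]; exact hb
      have hy : (robPos CS RS (n + 1)).1 = (robPos CS RS n).1 ∨
          G.Adj (robPos CS RS n).1 (robPos CS RS (n + 1)).1 := Or.inl hb
      have hc2 : copPos CS RS (n + 2) =
          shadowF2 v (copPos CS RS (n + 1)) (robPos CS RS (n + 1)) :=
        copstep (n + 1) (by rw [hcop]; exact fleg _ _ hy)
      rw [hc2]
      exact shadowF2_pos h1
    · have hadj : G.Adj (robPos CS RS n).1 (robPos CS RS (n + 1)).1 ∧
          (robPos CS RS (n + 1)).2 = (robPos CS RS n).2 := by
        rcases robstep n with h | h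
        · exact absurd (by rw [h]) hb
        · rw [SimpleGraph.boxProd_adj] at h
          rcases h with ⟨h1, h2⟩ | ⟨_, h2⟩
          · exact ⟨h1, h2.symm⟩
          · exact absurd h2.symm hb
      have hy : (robPos CS RS (n + 1)).1 = (robPos CS RS n).1 ∨
          G.Adj (robPos CS RS n).1 (robPos CS RS (n + 1)).1 := Or.inr hadj.1
      have hc2 : copPos CS RS (n + 2) =
          shadowF2 v (copPos CS RS (n + 1)) (robPos CS RS (n + 1)) :=
        copstep (n + 1) (by rw [hcop]; exact fleg _ _ hy)
      have hru : (robPos CS RS (n + 1)).2 ≠ v := by rw [hadj.2]; exact hne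
      refine ⟨?_, by rw [hadj.2, hfst], hru⟩
      rw [hc2, shadowF2_neg ?_]
      push_neg
      refine ⟨by rw [hcop]; exact hb, hru⟩

include hu hv in
lemma shadow2_damage (RS : RobberStrategy (α × β)) (hRS : RS.Legal (G □ H)) :
    damageSet (shadowCS2 G H u v) RS ⊆
      {p : α × β | p.2 = (robPos (shadowCS2 G H u v) RS 0).2} := by
  intro p hp
  obtain ⟨n, hpn, hall⟩ := hp
  have := (shadow2_key G H u v hu hv RS hRS n (fun k hk => (hall k hk).2)).2.1
  rw [hpn] at this
  exact this

end Shadow2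

end DamageBound

/-- If `G` and `H` are finite connected graphs both having a universal vertex, then
`dmg(G □ H) ≤ min {|V(G)|, |V(H)|}`. -/
theorem dmg_boxProd_le_min_of_universal {α β : Type*} [Fintype α] [Fintype β]
    (G : SimpleGraph α) (H : SimpleGraph β) (hG : G.Connected) (hH : H.Connected)
    (hu : ∃ u : α, ∀ w : α, w ≠ u → G.Adj u w)
    (hv : ∃ v : β, ∀ w : β, w ≠ v → H.Adj v w) :
    dmg (G □ H) ≤ min (Fintype.card α) (Fintype.card β) := by
  obtain ⟨u, hu⟩ := hu
  obtain ⟨v, hv⟩ := hv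
  apply le_min
  · -- bound by |α|, using the strategy shadowing the first coordinate
    apply Nat.sInf_le
    refine ⟨shadowCS2 G H u v, gMove_legal _ _ _, ?_⟩
    intro RS hRS
    have hsub : damageSet (shadowCS2 G H u v) RS ⊆
        (fun a : α => (a, (robPos (shadowCS2 G H u v) RS 0).2)) '' Set.univ := by
      intro p hp
      have := shadow2_damage G H u v hu hv RS hRS hp
      exact ⟨p.1, Set.mem_univ _, by ext <;> simp [this.symm]⟩
    calc (damageSet (shadowCS2 G H u v) RS).ncard
        ≤ ((fun a : α => (a, (robPos (shadowCS2 G H u v) RS 0).2)) '' Set.univ).ncard :=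
          Set.ncard_le_ncard hsub (Set.toFinite _)
      _ ≤ (Set.univ : Set α).ncard := Set.ncard_image_le (Set.toFinite _)
      _ = Fintype.card α := by rw [Set.ncard_univ, Nat.card_eq_fintype_card]
  · apply Nat.sInf_le
    refine ⟨shadowCS G H u v, gMove_legal _ _ _, ?_⟩
    intro RS hRS
    have hsub : damageSet (shadowCS G H u v) RS ⊆
        (fun b : β => ((robPos (shadowCS G H u v) RS 0).1, b)) '' Set.univ := by
      intro p hp
      have := shadow_damage G H u v hu hv RS hRS hp
      exact ⟨p.2, Set.mem_univ _, by ext <;> simp [this.symm]⟩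
    calc (damageSet (shadowCS G H u v) RS).ncard
        ≤ ((fun b : β => ((robPos (shadowCS G H u v) RS 0).1, b)) '' Set.univ).ncard :=
          Set.ncard_le_ncard hsub (Set.toFinite _)
      _ ≤ (Set.univ : Set β).ncard := Set.ncard_image_le (Set.toFinite _)
      _ = Fintype.card β := by rw [Set.ncard_univ, Nat.card_eq_fintype_card]
end

section
/- Let K_m and K_n be complete graphs on m and n vertices, respectively. If n ≥ m ≥ 3, then dmg(K_m □ K_n) = m. -/
open SimpleGraph

variable {V : Type*}

/-! ### Auxiliary development for `dmg_boxProd_complete` -/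

namespace DmgBoxAux

/-- Shorthand for the box product of two complete graphs. -/
abbrev KK (m n : ℕ) : SimpleGraph (Fin m × Fin n) :=
  (⊤ : SimpleGraph (Fin m)) □ (⊤ : SimpleGraph (Fin n))

lemma kk_adj {m n : ℕ} {x y : Fin m × Fin n} :
    (KK m n).Adj x y ↔ (x.1 ≠ y.1 ∧ x.2 = y.2) ∨ (x.2 ≠ y.2 ∧ x.1 = y.1) := by
  simp [KK, SimpleGraph.boxProd_adj]

lemma succ_mod_ne {m x : ℕ} (hm : 2 ≤ m) (hx : x < m) : (x + 1) % m ≠ x := by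
  rcases Nat.lt_or_ge (x + 1) m with h | h
  · rw [Nat.mod_eq_of_lt h]; omega
  · have hxm : x + 1 = m := by omega
    rw [hxm, Nat.mod_self]; omega

/-! #### The cop strategy: always keep column 0, match the robber's row. -/

/-- The cop's move as a function of current cop and robber positions. -/
def copMoveF {m n : ℕ} (c r : Fin m × Fin n) : Fin m × Fin n :=
  if c.1 = r.1 ∨ c.2 = r.2 then r else (r.1, c.2)

def copCS {m n : ℕ} (hm : 0 < m) (hn : 0 < n) : CopStrategy (Fin m × Fin n) where
  init := (⟨0, hm⟩, ⟨0, hn⟩)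
  move ch rh :=
    match ch, rh with
    | c :: _, r :: _ => copMoveF c r
    | c :: _, [] => c
    | [], _ => (⟨0, hm⟩, ⟨0, hn⟩)

lemma copMoveF_legal {m n : ℕ} (c r : Fin m × Fin n) :
    copMoveF c r = c ∨ (KK m n).Adj c (copMoveF c r) := by
  unfold copMoveF
  by_cases h : c.1 = r.1 ∨ c.2 = r.2
  · rw [if_pos h]
    by_cases hcr : c = r
    · exact Or.inl hcr.symm
    · refine Or.inr (kk_adj.mpr ?_)
      rw [Prod.ext_iff] at hcr
      tauto
  · rw [if_neg h]
    push_neg at h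
    exact Or.inr (kk_adj.mpr (Or.inl ⟨h.1, rfl⟩))

lemma copCS_legal {m n : ℕ} (hm : 0 < m) (hn : 0 < n) :
    (copCS hm hn).Legal (KK m n) := by
  intro c ch rh
  cases rh with
  | nil => exact Or.inl rfl
  | cons r rh' => exact copMoveF_legal c r

/-! #### The robber strategy: stay off the cop's row and column, visit new vertices. -/

/-- The robber's safety predicate: `v` is reachable from `r` in at most one step and
avoids the cop's row and column. -/
def S2pred {m n : ℕ} (c r v : Fin m × Fin n) : Prop :=
  (v = r ∨ (KK m n).Adj r v) ∧ v.1 ≠ c.1 ∧ v.2 ≠ c.2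

open Classical in
/-- The robber's move: prefer a safe unvisited vertex, else a safe vertex, else pass. -/
noncomputable def robMoveF {m n : ℕ} (c r : Fin m × Fin n)
    (vis : List (Fin m × Fin n)) : Fin m × Fin n :=
  if h1 : ∃ v, S2pred c r v ∧ v ∉ vis then h1.choose
  else if h2 : ∃ v, S2pred c r v then h2.choose
  else r

noncomputable def robRS {m n : ℕ} (hm : 0 < m) (hn : 0 < n) :
    RobberStrategy (Fin m × Fin n) where
  init c := (⟨(c.1.1 + 1) % m, Nat.mod_lt _ hm⟩, ⟨(c.2.1 + 1) % n, Nat.mod_lt _ hn⟩)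
  move ch rh :=
    match ch, rh with
    | c :: _, r :: rh' => robMoveF c r (r :: rh')
    | [], r :: _ => r
    | _, [] => (⟨0, hm⟩, ⟨0, hn⟩)

lemma robMoveF_legal {m n : ℕ} (c r : Fin m × Fin n) (vis : List (Fin m × Fin n)) :
    robMoveF c r vis = r ∨ (KK m n).Adj r (robMoveF c r vis) := by
  unfold robMoveF
  split_ifs with h1 h2
  · exact h1.choose_spec.1.1
  · exact h2.choose_spec.1
  · exact Or.inl rfl

lemma robRS_legal {m n : ℕ} (hm : 0 < m) (hn : 0 < n) :
    (robRS hm hn).Legal (KK m n) := by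
  intro r ch rh
  cases ch with
  | nil => exact Or.inl rfl
  | cons c ch' => exact robMoveF_legal c r (r :: rh)

lemma robMoveF_S2 {m n : ℕ} {c r : Fin m × Fin n} (vis : List (Fin m × Fin n))
    (h2 : ∃ v, S2pred c r v) : S2pred c r (robMoveF c r vis) := by
  unfold robMoveF
  by_cases hh1 : ∃ v, S2pred c r v ∧ v ∉ vis
  · rw [dif_pos hh1]; exact hh1.choose_spec.1
  · rw [dif_neg hh1, dif_pos h2]; exact h2.choose_spec

lemma robMoveF_notmem {m n : ℕ} {c r : Fin m × Fin n} {vis : List (Fin m × Fin n)}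
    (h1 : ∃ v, S2pred c r v ∧ v ∉ vis) : robMoveF c r vis ∉ vis := by
  unfold robMoveF
  rw [dif_pos h1]
  exact h1.choose_spec.2

lemma S2_nonempty {m n : ℕ} (hm : 2 ≤ m) (hn : 2 ≤ n) {c r : Fin m × Fin n}
    (hcr : c ≠ r) : ∃ v, S2pred c r v := by
  by_cases h1 : c.1 = r.1
  · have h2 : c.2 ≠ r.2 := fun h => hcr (Prod.ext_iff.mpr ⟨h1, h⟩)
    refine ⟨(⟨(r.1.1 + 1) % m, Nat.mod_lt _ (by omega)⟩, r.2), ?_, ?_, fun h => h2 h.symm⟩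
    · refine Or.inr (kk_adj.mpr (Or.inl ⟨?_, rfl⟩))
      exact fun h => succ_mod_ne hm r.1.2 (Fin.ext_iff.mp h.symm)
    · rw [h1]
      exact fun h => succ_mod_ne hm r.1.2 (Fin.ext_iff.mp h)
  · by_cases h2 : c.2 = r.2
    · refine ⟨(r.1, ⟨(r.2.1 + 1) % n, Nat.mod_lt _ (by omega)⟩), ?_, fun h => h1 h.symm, ?_⟩
      · refine Or.inr (kk_adj.mpr (Or.inr ⟨?_, rfl⟩))
        exact fun h => succ_mod_ne hn r.2.2 (Fin.ext_iff.mp h.symm)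
      · rw [h2]
        exact fun h => succ_mod_ne hn r.2.2 (Fin.ext_iff.mp h)
    · exact ⟨r, Or.inl rfl, fun h => h1 h.symm, fun h => h2 h.symm⟩


/-- Counting: if the robber sits at `r`, the cop (having moved) is at `c ≠ r`, and at most
`m - 1` vertices have been visited, then there is a safe unvisited move. -/
lemma S1_nonempty {m n : ℕ} (hm : 3 ≤ m) (hmn : m ≤ n) {c r : Fin m × Fin n}
    (hcr : c ≠ r) {vis : List (Fin m × Fin n)} (hrvis : r ∈ vis)
    (hcard : vis.toFinset.card ≤ m - 1) :
    ∃ v, S2pred c r v ∧ v ∉ vis := by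
  by_cases h1 : c.1 = r.1
  · -- cop shares the robber's row: move within the column
    have h2 : c.2 ≠ r.2 := fun h => hcr (Prod.ext_iff.mpr ⟨h1, h⟩)
    set A : Finset (Fin m × Fin n) :=
      (Finset.univ.erase r.1).image (fun i => (i, r.2)) with hA
    have hinj : Function.Injective (fun i : Fin m => ((i, r.2) : Fin m × Fin n)) :=
      fun a b h => (Prod.ext_iff.mp h).1
    have hAcard : A.card = m - 1 := by
      rw [hA, Finset.card_image_of_injective _ hinj,
        Finset.card_erase_of_mem (Finset.mem_univ _), Finset.card_univ, Fintype.card_fin]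
    have hrA : r ∉ A := by
      simp only [hA, Finset.mem_image, Finset.mem_erase]
      rintro ⟨i, ⟨hi, -⟩, hir⟩
      exact hi (Prod.ext_iff.mp hir).1
    have hns : ¬ A ⊆ vis.toFinset := by
      intro hsub
      have h3 : insert r A ⊆ vis.toFinset :=
        Finset.insert_subset (List.mem_toFinset.mpr hrvis) hsub
      have h4 := Finset.card_le_card h3
      rw [Finset.card_insert_of_notMem hrA, hAcard] at h4
      omega
    obtain ⟨v, hvA, hvvis⟩ := Finset.not_subset.mp hns
    obtain ⟨i, hi, rfl⟩ := Finset.mem_image.mp hvA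
    have hir : i ≠ r.1 := (Finset.mem_erase.mp hi).1
    refine ⟨(i, r.2), ⟨Or.inr (kk_adj.mpr (Or.inl ⟨hir.symm, rfl⟩)), ?_, fun h => h2 h.symm⟩,
      fun h => hvvis (List.mem_toFinset.mpr h)⟩
    rw [h1]
    exact hir
  · by_cases h2 : c.2 = r.2
    · -- cop shares the robber's column: move within the row
      set A : Finset (Fin m × Fin n) :=
        (Finset.univ.erase r.2).image (fun j => (r.1, j)) with hA
      have hinj : Function.Injective (fun j : Fin n => ((r.1, j) : Fin m × Fin n)) :=
        fun a b h => (Prod.ext_iff.mp h).2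
      have hAcard : A.card = n - 1 := by
        rw [hA, Finset.card_image_of_injective _ hinj,
          Finset.card_erase_of_mem (Finset.mem_univ _), Finset.card_univ, Fintype.card_fin]
      have hrA : r ∉ A := by
        simp only [hA, Finset.mem_image, Finset.mem_erase]
        rintro ⟨j, ⟨hj, -⟩, hjr⟩
        exact hj (Prod.ext_iff.mp hjr).2
      have hns : ¬ A ⊆ vis.toFinset := by
        intro hsub
        have h3 : insert r A ⊆ vis.toFinset :=
          Finset.insert_subset (List.mem_toFinset.mpr hrvis) hsub
        have h4 := Finset.card_le_card h3
        rw [Finset.card_insert_of_notMem hrA, hAcard] at h4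
        omega
      obtain ⟨v, hvA, hvvis⟩ := Finset.not_subset.mp hns
      obtain ⟨j, hj, rfl⟩ := Finset.mem_image.mp hvA
      have hjr : j ≠ r.2 := (Finset.mem_erase.mp hj).1
      refine ⟨(r.1, j), ⟨Or.inr (kk_adj.mpr (Or.inr ⟨hjr.symm, rfl⟩)), fun h => h1 h.symm, ?_⟩,
        fun h => hvvis (List.mem_toFinset.mpr h)⟩
      rw [h2]
      exact hjr
    · -- cop shares neither coordinate
      set A : Finset (Fin m × Fin n) :=
        (Finset.univ.erase c.1).image (fun i => (i, r.2)) with hA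
      have hinj : Function.Injective (fun i : Fin m => ((i, r.2) : Fin m × Fin n)) :=
        fun a b h => (Prod.ext_iff.mp h).1
      have hAcard : A.card = m - 1 := by
        rw [hA, Finset.card_image_of_injective _ hinj,
          Finset.card_erase_of_mem (Finset.mem_univ _), Finset.card_univ, Fintype.card_fin]
      by_cases hsub : A ⊆ vis.toFinset
      · -- escape along the row to a fresh column
        have hr2mem : r.2 ∈ (Finset.univ : Finset (Fin n)).erase c.2 :=
          Finset.mem_erase.mpr ⟨fun h => h2 h.symm, Finset.mem_univ _⟩
        have hB : (((Finset.univ : Finset (Fin n)).erase c.2).erase r.2).Nonempty := by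
          rw [← Finset.card_pos, Finset.card_erase_of_mem hr2mem,
            Finset.card_erase_of_mem (Finset.mem_univ _), Finset.card_univ, Fintype.card_fin]
          omega
        obtain ⟨j, hj⟩ := hB
        have hj1 : j ≠ r.2 := (Finset.mem_erase.mp hj).1
        have hj2 : j ≠ c.2 := (Finset.mem_erase.mp (Finset.mem_erase.mp hj).2).1
        refine ⟨(r.1, j), ⟨Or.inr (kk_adj.mpr (Or.inr ⟨hj1.symm, rfl⟩)),
          fun h => h1 h.symm, hj2⟩, ?_⟩
        intro hmem
        have hvA : ((r.1, j) : Fin m × Fin n) ∉ A := by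
          simp only [hA, Finset.mem_image, Finset.mem_erase]
          rintro ⟨i, -, hir⟩
          exact hj1 (Prod.ext_iff.mp hir).2.symm
        have h3 : insert ((r.1, j) : Fin m × Fin n) A ⊆ vis.toFinset :=
          Finset.insert_subset (List.mem_toFinset.mpr hmem) hsub
        have h4 := Finset.card_le_card h3
        rw [Finset.card_insert_of_notMem hvA, hAcard] at h4
        omega
      · obtain ⟨v, hvA, hvvis⟩ := Finset.not_subset.mp hsub
        obtain ⟨i, hi, rfl⟩ := Finset.mem_image.mp hvA
        have hic : i ≠ c.1 := (Finset.mem_erase.mp hi).1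
        refine ⟨(i, r.2), ⟨?_, hic, fun h => h2 h.symm⟩,
          fun h => hvvis (List.mem_toFinset.mpr h)⟩
        by_cases hir : i = r.1
        · exact Or.inl (Prod.ext_iff.mpr ⟨hir, rfl⟩)
        · exact Or.inr (kk_adj.mpr (Or.inl ⟨fun h => hir h.symm, rfl⟩))

/-! #### Generic facts about `play`. -/

section Game

variable {V : Type*}

lemma histR_succ (CS : CopStrategy V) (RS : RobberStrategy V) (t : ℕ) :
    (play CS RS (t + 1)).2.2.2 = robPos CS RS t :: (play CS RS t).2.2.2 := rfl

lemma mem_histR (CS : CopStrategy V) (RS : RobberStrategy V) :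
    ∀ t (a : V), a ∈ (play CS RS t).2.2.2 ↔ ∃ k, k < t ∧ robPos CS RS k = a := by
  intro t
  induction t with
  | zero => intro a; simp [play]
  | succ t ih =>
    intro a
    rw [histR_succ, List.mem_cons, ih]
    constructor
    · rintro (rfl | ⟨k, hk, rfl⟩)
      · exact ⟨t, by omega, rfl⟩
      · exact ⟨k, by omega, rfl⟩
    · rintro ⟨k, hk, rfl⟩
      rcases Nat.lt_or_ge k t with h | h
      · exact Or.inr ⟨k, h, rfl⟩
      · have hkt : k = t := by omega
        exact Or.inl (by rw [hkt])

lemma cop_step {G : SimpleGraph V} (CS : CopStrategy V) (RS : RobberStrategy V)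
    (hCS : CS.Legal G) (t : ℕ) :
    copPos CS RS (t + 1) = copPos CS RS t ∨
      G.Adj (copPos CS RS t) (copPos CS RS (t + 1)) :=
  hCS (copPos CS RS t) (play CS RS t).2.2.1 (robPos CS RS t :: (play CS RS t).2.2.2)

lemma rob_step {G : SimpleGraph V} (CS : CopStrategy V) (RS : RobberStrategy V)
    (hRS : RS.Legal G) (t : ℕ) :
    robPos CS RS (t + 1) = robPos CS RS t ∨
      G.Adj (robPos CS RS t) (robPos CS RS (t + 1)) :=
  hRS (robPos CS RS t) (copPos CS RS (t + 1) :: copPos CS RS t :: (play CS RS t).2.2.1)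
    (play CS RS t).2.2.2

end Game

lemma copCS_step {m n : ℕ} (hm : 0 < m) (hn : 0 < n)
    (RS : RobberStrategy (Fin m × Fin n)) (t : ℕ) :
    copPos (copCS hm hn) RS (t + 1) =
      copMoveF (copPos (copCS hm hn) RS t) (robPos (copCS hm hn) RS t) := rfl

lemma robRS_step {m n : ℕ} (hm : 0 < m) (hn : 0 < n)
    (CS : CopStrategy (Fin m × Fin n)) (t : ℕ) :
    robPos CS (robRS hm hn) (t + 1) =
      robMoveF (copPos CS (robRS hm hn) (t + 1)) (robPos CS (robRS hm hn) t)
        (robPos CS (robRS hm hn) t :: (play CS (robRS hm hn) t).2.2.2) := rfl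


/-! #### The upper bound: the cop strategy confines damage to one column. -/

theorem upper_bound {m n : ℕ} (hm : 0 < m) (hn : 0 < n)
    (RS : RobberStrategy (Fin m × Fin n)) (hRS : RS.Legal (KK m n)) :
    (damageSet (copCS hm hn) RS).ncard ≤ m := by
  set CS := copCS hm hn with hCSdef
  set C := copPos CS RS with hC
  set R := robPos CS RS with hR
  have key : ∀ t, (∀ k, k ≤ t → C k ≠ R k ∧ C (k + 1) ≠ R k) →
      (R t).2 = (R 0).2 ∧ (R 0).2 ≠ ⟨0, hn⟩ ∧ C (t + 1) = ((R t).1, ⟨0, hn⟩) := by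
    intro t
    induction t with
    | zero =>
      intro hNC
      obtain ⟨h0, h1⟩ := hNC 0 le_rfl
      have hc1 : C 1 = copMoveF (C 0) (R 0) := copCS_step hm hn RS 0
      by_cases hcond : (C 0).1 = (R 0).1 ∨ (C 0).2 = (R 0).2
      · rw [copMoveF, if_pos hcond] at hc1
        exact absurd hc1 h1
      · push_neg at hcond
        rw [copMoveF, if_neg (by push_neg; exact hcond)] at hc1
        have hC02 : (C 0).2 = ⟨0, hn⟩ := rfl
        refine ⟨rfl, ?_, ?_⟩
        · rw [← hC02]; exact fun h => hcond.2 h.symm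
        · rw [hc1, hC02]
    | succ t ih =>
      intro hNC
      have hNCt := fun k hk => hNC k (Nat.le_succ_of_le hk)
      obtain ⟨hb, hb0, hCt⟩ := ih hNCt
      obtain ⟨hk1, hk2⟩ := hNC (t + 1) le_rfl
      have hc2 : C (t + 2) = copMoveF (C (t + 1)) (R (t + 1)) := copCS_step hm hn RS (t + 1)
      by_cases hcond : (C (t + 1)).1 = (R (t + 1)).1 ∨ (C (t + 1)).2 = (R (t + 1)).2
      · rw [copMoveF, if_pos hcond] at hc2
        exact absurd hc2 hk2
      · push_neg at hcond
        rw [copMoveF, if_neg (by push_neg; exact hcond)] at hc2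
        have hrow : (R (t + 1)).1 ≠ (R t).1 := by
          intro h
          exact hcond.1 (by rw [hCt, h])
        have hcol : (R (t + 1)).2 = (R t).2 := by
          rcases rob_step CS RS hRS t with h | h
          · exact congrArg Prod.snd h
          · rcases kk_adj.mp h with ⟨h', hcc⟩ | ⟨hcc, h'⟩
            · exact hcc.symm
            · exact absurd h'.symm hrow
        refine ⟨hcol.trans hb, hb0, ?_⟩
        rw [hc2]
        have hcc2 : (C (t + 1)).2 = ⟨0, hn⟩ := by rw [hCt]
        rw [hcc2]
  have hsub : damageSet CS RS ⊆ {v : Fin m × Fin n | v.2 = (R 0).2} := by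
    rintro v ⟨t, hv, hNC⟩
    have hvt := (key t hNC).1
    simp only [Set.mem_setOf_eq]
    rw [← hv, hvt]
  have heq : {v : Fin m × Fin n | v.2 = (R 0).2} =
      (fun i : Fin m => (i, (R 0).2)) '' Set.univ := by
    ext v
    constructor
    · intro hv
      exact ⟨v.1, Set.mem_univ _, Prod.ext_iff.mpr ⟨rfl, hv.symm⟩⟩
    · rintro ⟨i, -, rfl⟩
      rfl
  calc (damageSet CS RS).ncard ≤ ({v : Fin m × Fin n | v.2 = (R 0).2}).ncard :=
        Set.ncard_le_ncard hsub (Set.toFinite _)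
    _ = m := by
        rw [heq, Set.ncard_image_of_injective _ (fun a b h => (Prod.ext_iff.mp h).1),
          Set.ncard_univ, Nat.card_eq_fintype_card, Fintype.card_fin]

/-! #### The lower bound: the robber strategy damages at least `m` vertices. -/

theorem lower_bound {m n : ℕ} (hm : 3 ≤ m) (hmn : m ≤ n) (hm0 : 0 < m) (hn0 : 0 < n)
    (CS : CopStrategy (Fin m × Fin n)) (hCS : CS.Legal (KK m n)) :
    m ≤ (damageSet CS (robRS hm0 hn0)).ncard := by
  set RS := robRS hm0 hn0 with hRSdef
  set C := copPos CS RS with hC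
  set R := robPos CS RS with hR
  have missOf : ∀ t, ((C t).1 ≠ (R t).1 ∧ (C t).2 ≠ (R t).2) → C (t + 1) ≠ R t := by
    intro t ht
    rcases cop_step CS RS hCS t with h | h
    · intro heq
      exact ht.1 (congrArg Prod.fst (h.symm.trans heq))
    · intro heq
      rcases kk_adj.mp h with ⟨h1, h2⟩ | ⟨h2, h1⟩
      · exact ht.2 (h2.trans (congrArg Prod.snd heq))
      · exact ht.1 (h1.trans (congrArg Prod.fst heq))
  have inv : ∀ t, (C t).1 ≠ (R t).1 ∧ (C t).2 ≠ (R t).2 := by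
    intro t
    induction t with
    | zero =>
      constructor
      · exact fun h => succ_mod_ne (by omega) (C 0).1.2 (Fin.ext_iff.mp h).symm
      · exact fun h => succ_mod_ne (by omega) (C 0).2.2 (Fin.ext_iff.mp h).symm
    | succ t ih =>
      have hmiss := missOf t ih
      have hS2 := robMoveF_S2 (R t :: (play CS RS t).2.2.2)
        (S2_nonempty (by omega) (by omega) hmiss)
      rw [← robRS_step hm0 hn0 CS t] at hS2
      exact ⟨fun h => hS2.2.1 h.symm, fun h => hS2.2.2 h.symm⟩
  have NCall : ∀ k, C k ≠ R k ∧ C (k + 1) ≠ R k := fun k =>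
    ⟨fun h => (inv k).1 (congrArg Prod.fst h), missOf k (inv k)⟩
  have dam : ∀ t, R t ∈ damageSet CS RS := fun t => ⟨t, rfl, fun k _ => NCall k⟩
  have grow : ∀ t, t < m → ((Finset.range (t + 1)).image R).card = t + 1 := by
    intro t
    induction t with
    | zero => intro _; simp
    | succ t ih =>
      intro ht
      have hvissub : (R t :: (play CS RS t).2.2.2).toFinset ⊆ (Finset.range (t + 1)).image R := by
        intro a ha
        rw [List.mem_toFinset, List.mem_cons, mem_histR] at ha
        rcases ha with rfl | ⟨k, hk, rfl⟩
        · exact Finset.mem_image.mpr ⟨t, Finset.mem_range.mpr (by omega), rfl⟩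
        · exact Finset.mem_image.mpr ⟨k, Finset.mem_range.mpr (by omega), rfl⟩
      have hviscard : (R t :: (play CS RS t).2.2.2).toFinset.card ≤ m - 1 := by
        have h1 := Finset.card_le_card hvissub
        have h2 := Finset.card_image_le (f := R) (s := Finset.range (t + 1))
        rw [Finset.card_range] at h2
        omega
      have hS1 := S1_nonempty hm hmn (missOf t (inv t)) List.mem_cons_self hviscard
      have hnotvis := robMoveF_notmem hS1
      rw [← robRS_step hm0 hn0 CS t] at hnotvis
      have hnotmem : R (t + 1) ∉ (Finset.range (t + 1)).image R := by
        intro hmem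
        obtain ⟨k, hk, hkeq⟩ := Finset.mem_image.mp hmem
        rw [Finset.mem_range] at hk
        apply hnotvis
        rw [List.mem_cons, mem_histR]
        rcases Nat.lt_or_ge k t with h | h
        · exact Or.inr ⟨k, h, hkeq⟩
        · have hkt : k = t := by omega
          rw [hkt] at hkeq
          exact Or.inl hkeq.symm
      rw [Finset.range_add_one, Finset.image_insert,
        Finset.card_insert_of_notMem hnotmem, ih (by omega)]
  have hfin : (((Finset.range m).image R : Finset (Fin m × Fin n)) : Set (Fin m × Fin n)) ⊆
      damageSet CS RS := by
    intro a ha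
    rw [Finset.coe_image] at ha
    obtain ⟨k, -, rfl⟩ := ha
    exact dam k
  have hcard : ((Finset.range m).image R).card = m := by
    have hg := grow (m - 1) (by omega)
    have hmm : m - 1 + 1 = m := by omega
    rw [hmm] at hg
    exact hg
  calc m = (((Finset.range m).image R : Finset (Fin m × Fin n)) : Set (Fin m × Fin n)).ncard := by
        rw [Set.ncard_coe_finset, hcard]
    _ ≤ (damageSet CS RS).ncard := Set.ncard_le_ncard hfin (Set.toFinite _)

end DmgBoxAux
/-- If `n ≥ m ≥ 3`, then `dmg(K_m □ K_n) = m`. -/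
theorem dmg_boxProd_complete {m n : ℕ} (hm : 3 ≤ m) (hmn : m ≤ n) :
    dmg ((⊤ : SimpleGraph (Fin m)) □ (⊤ : SimpleGraph (Fin n))) = m := by
  have hm0 : 0 < m := by omega
  have hn0 : 0 < n := by omega
  have hmem : m ∈ { k | ∃ CS : CopStrategy (Fin m × Fin n),
      CS.Legal ((⊤ : SimpleGraph (Fin m)) □ (⊤ : SimpleGraph (Fin n))) ∧
      ∀ RS : RobberStrategy (Fin m × Fin n),
        RS.Legal ((⊤ : SimpleGraph (Fin m)) □ (⊤ : SimpleGraph (Fin n))) →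
          (damageSet CS RS).ncard ≤ k } :=
    ⟨DmgBoxAux.copCS hm0 hn0, DmgBoxAux.copCS_legal hm0 hn0,
      fun RS hRS => DmgBoxAux.upper_bound hm0 hn0 RS hRS⟩
  refine le_antisymm (Nat.sInf_le hmem) (le_csInf ⟨m, hmem⟩ ?_)
  rintro b ⟨CS, hCS, hball⟩
  exact le_trans (DmgBoxAux.lower_bound hm hmn hm0 hn0 CS hCS)
    (hball _ (DmgBoxAux.robRS_legal hm0 hn0))
end

section
/- For any finite connected simple graphs G and H, dmg(G □ H) ≤ max{ dmg(G)·|V(H)| , (dmg(H)+1)·|V(G)| }. -/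
open SimpleGraph

variable {V : Type*}

-- ===================== our development =====================
open scoped Classical

namespace BoxDmg
set_option linter.unusedSectionVars false

section Generic
variable {V : Type*}

/-- Simulated cop history for a given (simulated) robber history (most recent first). -/
def ch (CS : CopStrategy V) : List V → List V
  | [] => []
  | [_] => [CS.init]
  | _ :: b :: t => CS.move (ch CS (b :: t)) (b :: t) :: ch CS (b :: t)

/-- The simulated game is still alive: no capture-type coincidence has been recorded. -/
def aliveL (CS : CopStrategy V) : List V → Prop
  | [] => True
  | [a] => CS.init ≠ a
  | a :: b :: t => aliveL CS (b :: t) ∧ CS.move (ch CS (b :: t)) (b :: t) ≠ b ∧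
      CS.move (ch CS (b :: t)) (b :: t) ≠ a

/-- The intended coordinate of the cop, given the simulated robber history. -/
noncomputable def target (CS : CopStrategy V) : List V → V
  | [] => CS.init
  | a :: t => if aliveL CS (a :: t) then CS.move (ch CS (a :: t)) (a :: t) else a

/-- The history list (most recent first) of the first `n` values of a sequence. -/
def glist (sq : ℕ → V) : ℕ → List V
  | 0 => []
  | n + 1 => sq n :: glist sq n

/-- The simulated cop position sequence against the simulated robber sequence `sq`. -/
noncomputable def simSeq (CS : CopStrategy V) (sq : ℕ → V) : ℕ → V
  | 0 => CS.init
  | j + 1 => CS.move (ch CS (glist sq (j + 1))) (glist sq (j + 1))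

lemma glist_length (sq : ℕ → V) (n : ℕ) : (glist sq n).length = n := by
  induction n with
  | zero => rfl
  | succ n ih => simp [glist, ih]

lemma ch_glist_succ (CS : CopStrategy V) (sq : ℕ → V) (n : ℕ) :
    ch CS (glist sq (n + 2)) = simSeq CS sq (n + 1) :: ch CS (glist sq (n + 1)) := by
  simp [glist, ch, simSeq]

lemma simSeq_eq_move (CS : CopStrategy V) (sq : ℕ → V) (n : ℕ) :
    simSeq CS sq (n + 1) = CS.move (ch CS (glist sq (n + 1))) (glist sq (n + 1)) := rfl

/-- fail j: the simulated game has a capture-coincidence at simulated round j. -/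
noncomputable def failP (CS : CopStrategy V) (sq : ℕ → V) (j : ℕ) : Prop :=
  simSeq CS sq j = sq j ∨ simSeq CS sq (j + 1) = sq j

lemma move_ch (CS : CopStrategy V) (sq : ℕ → V) (n : ℕ) :
    CS.move (ch CS (glist sq (n + 1))) (glist sq (n + 1)) = simSeq CS sq (n + 1) := rfl

/-- Characterization of aliveness in terms of failures. -/
lemma alive_iff (CS : CopStrategy V) (sq : ℕ → V) (n : ℕ) :
    aliveL CS (glist sq (n + 1)) ↔
      (∀ j, j + 2 ≤ n + 1 → ¬ failP CS sq j) ∧ simSeq CS sq n ≠ sq n := by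
  induction n with
  | zero =>
    simp only [glist, aliveL, simSeq, failP]
    constructor
    · intro h; exact ⟨by omega, h⟩
    · exact fun h => h.2
  | succ n ih =>
    have hstep : aliveL CS (glist sq (n+2)) ↔
        (aliveL CS (glist sq (n+1)) ∧ simSeq CS sq (n+1) ≠ sq n ∧
          simSeq CS sq (n+1) ≠ sq (n+1)) := Iff.rfl
    rw [hstep, ih]
    constructor
    · rintro ⟨⟨ha, hb⟩, hc, hd⟩
      refine ⟨fun j hj => ?_, hd⟩
      rcases Nat.lt_or_ge (j+2) (n+2) with h|h
      · exact ha j (by omega)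
      · have hj' : j = n := by omega
        subst hj'
        rw [failP]; push_neg; exact ⟨hb, hc⟩
    · rintro ⟨ha, hb⟩
      have hfn := ha n (by omega)
      rw [failP] at hfn; push_neg at hfn
      exact ⟨⟨fun j hj => ha j (by omega), hfn.1⟩, hfn.2, hb⟩

lemma not_alive_of_fail_lt (CS : CopStrategy V) (sq : ℕ → V) {j n : ℕ} (hj : j + 2 ≤ n + 1)
    (h : failP CS sq j) : ¬ aliveL CS (glist sq (n + 1)) := by
  rw [alive_iff]
  rintro ⟨h1, _⟩
  exact h1 j hj h

lemma not_alive_of_failI (CS : CopStrategy V) (sq : ℕ → V) {n : ℕ}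
    (h : simSeq CS sq n = sq n) : ¬ aliveL CS (glist sq (n + 1)) := by
  rw [alive_iff]
  rintro ⟨_, h2⟩
  exact h2 h

lemma alive_anti (CS : CopStrategy V) (sq : ℕ → V) {n m : ℕ} (hnm : n ≤ m) (hn : 1 ≤ n)
    (h : aliveL CS (glist sq m)) : aliveL CS (glist sq n) := by
  obtain ⟨n', rfl⟩ : ∃ n', n = n' + 1 := ⟨n - 1, by omega⟩
  obtain ⟨m', rfl⟩ : ∃ m', m = m' + 1 := ⟨m - 1, by omega⟩
  rw [alive_iff] at h ⊢
  obtain ⟨h1, h2⟩ := h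
  refine ⟨fun j hj => h1 j (by omega), ?_⟩
  rcases eq_or_lt_of_le (Nat.succ_le_succ_iff.mp hnm) with he | hlt
  · subst he; exact h2
  · intro hcon
    exact h1 n' (by omega) (Or.inl hcon)

/-- If the simulation is alive at level n+1, the target is the simulated cop position. -/
lemma target_glist (CS : CopStrategy V) (sq : ℕ → V) (n : ℕ) :
    target CS (glist sq (n + 1)) =
      if aliveL CS (glist sq (n + 1)) then simSeq CS sq (n + 1) else sq n := by
  simp [glist, target, simSeq]
  exact if_congr Iff.rfl rfl rfl

lemma alive_no_failI (CS : CopStrategy V) (sq : ℕ → V) {n jj : ℕ}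
    (h : aliveL CS (glist sq (n+1))) (hle : jj ≤ n) : simSeq CS sq jj ≠ sq jj := by
  rw [alive_iff] at h
  rcases eq_or_lt_of_le hle with he | hlt
  · rw [he]; exact h.2
  · exact fun hc => h.1 jj (by omega) (Or.inl hc)

lemma alive_no_failII (CS : CopStrategy V) (sq : ℕ → V) {n jj : ℕ}
    (h : aliveL CS (glist sq (n+1))) (hlt : jj < n) : simSeq CS sq (jj+1) ≠ sq jj :=
  fun hc => ((alive_iff CS sq n).mp h).1 jj (by omega) (Or.inr hc)

/-- A robber strategy that replays a hard-coded sequence (with a legality guard). -/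
noncomputable def mkRob (Gr : SimpleGraph V) (sq : ℕ → V) : RobberStrategy V where
  init := fun _ => sq 0
  move := fun _ rh =>
    match rh with
    | [] => sq 0
    | x :: rest =>
      if sq (rest.length + 1) = x ∨ Gr.Adj x (sq (rest.length + 1)) then
        sq (rest.length + 1) else x

lemma mkRob_legal (Gr : SimpleGraph V) (sq : ℕ → V) : (mkRob Gr sq).Legal Gr := by
  intro x ch rh
  show (if sq (rh.length + 1) = x ∨ Gr.Adj x (sq (rh.length + 1)) then
      sq (rh.length + 1) else x) = x ∨ Gr.Adj x
      (if sq (rh.length + 1) = x ∨ Gr.Adj x (sq (rh.length + 1)) then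
      sq (rh.length + 1) else x)
  by_cases h : sq (rh.length + 1) = x ∨ Gr.Adj x (sq (rh.length + 1))
  · rw [if_pos h]
    rcases h with h | h
    · exact Or.inl h
    · exact Or.inr h
  · rw [if_neg h]; exact Or.inl rfl

lemma ch_head_cons (CS : CopStrategy V) (sq : ℕ → V) (j : ℕ) :
    ch CS (glist sq (j + 1)) = simSeq CS sq j :: (ch CS (glist sq (j + 1))).tail := by
  cases j with
  | zero => rfl
  | succ j => rw [ch_glist_succ]; rfl

lemma play_mkRob (CS : CopStrategy V) (Gr : SimpleGraph V) (sq : ℕ → V)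
    (hleg : ∀ j, sq (j + 1) = sq j ∨ Gr.Adj (sq j) (sq (j + 1))) :
    ∀ j, play CS (mkRob Gr sq) j =
      (simSeq CS sq j, sq j, (ch CS (glist sq (j + 1))).tail, glist sq j) := by
  intro j
  induction j with
  | zero => rfl
  | succ j ih =>
    show (let p := play CS (mkRob Gr sq) j;
          let c := CS.move (p.1 :: p.2.2.1) (p.2.1 :: p.2.2.2);
          let r := (mkRob Gr sq).move (c :: p.1 :: p.2.2.1) (p.2.1 :: p.2.2.2);
          (c, r, p.1 :: p.2.2.1, p.2.1 :: p.2.2.2)) = _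
    rw [ih]
    have hch : (simSeq CS sq j :: (ch CS (glist sq (j + 1))).tail) = ch CS (glist sq (j+1)) :=
      (ch_head_cons CS sq j).symm
    simp only []
    rw [hch]
    have hc : CS.move (ch CS (glist sq (j+1))) (sq j :: glist sq j) = simSeq CS sq (j+1) := rfl
    rw [hc]
    have hr : (mkRob Gr sq).move (simSeq CS sq (j+1) :: ch CS (glist sq (j+1))) (sq j :: glist sq j)
        = sq (j+1) := by
      show (if sq ((glist sq j).length + 1) = sq j ∨ Gr.Adj (sq j) (sq ((glist sq j).length + 1)) then
        sq ((glist sq j).length + 1) else sq j) = sq (j+1)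
      rw [glist_length]
      rw [if_pos (hleg j)]
    rw [hr]
    rw [show (ch CS (glist sq (j+2))).tail = ch CS (glist sq (j+1)) from by rw [ch_glist_succ]; rfl]
    rfl

lemma robPos_mkRob (CS : CopStrategy V) (Gr : SimpleGraph V) (sq : ℕ → V)
    (hleg : ∀ j, sq (j + 1) = sq j ∨ Gr.Adj (sq j) (sq (j + 1))) (j : ℕ) :
    robPos CS (mkRob Gr sq) j = sq j := by
  rw [robPos, play_mkRob CS Gr sq hleg]

lemma copPos_mkRob (CS : CopStrategy V) (Gr : SimpleGraph V) (sq : ℕ → V)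
    (hleg : ∀ j, sq (j + 1) = sq j ∨ Gr.Adj (sq j) (sq (j + 1))) (j : ℕ) :
    copPos CS (mkRob Gr sq) j = simSeq CS sq j := by
  rw [copPos, play_mkRob CS Gr sq hleg]

lemma target_nil_step {Gr : SimpleGraph V} {CS : CopStrategy V} (hCS : CS.Legal Gr) (x : V) :
    target CS [x] = CS.init ∨ Gr.Adj CS.init (target CS [x]) := by
  show (if aliveL CS [x] then CS.move (ch CS [x]) [x] else x) = CS.init ∨
      Gr.Adj CS.init (if aliveL CS [x] then CS.move (ch CS [x]) [x] else x)
  by_cases ha : aliveL CS [x]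
  · rw [if_pos ha]
    have hch : ch CS [x] = [CS.init] := rfl
    rw [hch]
    exact hCS CS.init [] [x]
  · rw [if_neg ha]
    have : ¬ (CS.init ≠ x) := ha
    push_neg at this
    exact Or.inl this.symm

lemma target_cons_step {Gr : SimpleGraph V} {CS : CopStrategy V} (hCS : CS.Legal Gr)
    (x b : V) (t : List V) (hx : x = b ∨ Gr.Adj b x) :
    target CS (x :: b :: t) = target CS (b :: t) ∨
      Gr.Adj (target CS (b :: t)) (target CS (x :: b :: t)) := by
  set cj := CS.move (ch CS (b :: t)) (b :: t) with hcj
  have hunf : target CS (x :: b :: t) =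
      if aliveL CS (x :: b :: t) then CS.move (ch CS (x :: b :: t)) (x :: b :: t) else x := rfl
  have hunf2 : target CS (b :: t) = if aliveL CS (b :: t) then cj else b := rfl
  have hal : aliveL CS (x :: b :: t) ↔ (aliveL CS (b :: t) ∧ cj ≠ b ∧ cj ≠ x) := Iff.rfl
  by_cases ha : aliveL CS (x :: b :: t)
  · have hb : aliveL CS (b :: t) := (hal.mp ha).1
    rw [hunf, if_pos ha, hunf2, if_pos hb]
    have hch : ch CS (x :: b :: t) = cj :: ch CS (b :: t) := rfl
    rw [hch]
    exact hCS cj (ch CS (b :: t)) (x :: b :: t)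
  · by_cases hb : aliveL CS (b :: t)
    · rw [hunf, if_neg ha, hunf2, if_pos hb]
      have : ¬ (aliveL CS (b :: t) ∧ cj ≠ b ∧ cj ≠ x) := fun hc => ha (hal.mpr hc)
      push_neg at this
      have h' := this hb
      by_cases hcb : cj = b
      · rcases hx with hx | hx
        · exact Or.inl (hx.trans hcb.symm)
        · rw [hcb]; exact Or.inr hx
      · exact Or.inl (h' hcb).symm
    · rw [hunf, if_neg ha, hunf2, if_neg hb]
      rcases hx with hx | hx
      · exact Or.inl hx
      · exact Or.inr hx

end Generic
section Product
variable {α β : Type*} [Inhabited α] [Inhabited β]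

/-- α-coordinate event values of a robber history (most recent first):
the positions after each α-move, plus the initial position. -/
noncomputable def gseq : List (α × β) → List α
  | [] => []
  | [x] => [x.1]
  | x :: s :: t => if x.1 = s.1 then gseq (s :: t) else x.1 :: gseq (s :: t)

/-- β-coordinate event values: positions after each non-α-move (β-move or pass). -/
noncomputable def hseq : List (α × β) → List β
  | [] => []
  | [_] => []
  | x :: s :: t => if x.1 = s.1 then x.2 :: hseq (s :: t) else hseq (s :: t)

noncomputable def copNext (CSG : CopStrategy α) (CSH : CopStrategy β)
    (rh : List (α × β)) : α × β :=
  (BoxDmg.target CSG (gseq rh), BoxDmg.target CSH (hseq rh))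

noncomputable def prodCS (G : SimpleGraph α) (H : SimpleGraph β)
    (CSG : CopStrategy α) (CSH : CopStrategy β) : CopStrategy (α × β) where
  init := (CSG.init, CSH.init)
  move := fun ch rh =>
    match ch with
    | [] => (CSG.init, CSH.init)
    | c :: _ =>
      if copNext CSG CSH rh = c ∨ (G □ H).Adj c (copNext CSG CSH rh) then
        copNext CSG CSH rh else c

lemma prodCS_legal (G : SimpleGraph α) (H : SimpleGraph β)
    (CSG : CopStrategy α) (CSH : CopStrategy β) :
    (prodCS G H CSG CSH).Legal (G □ H) := by
  intro c ch rh
  show (if copNext CSG CSH rh = c ∨ (G □ H).Adj c (copNext CSG CSH rh) then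
        copNext CSG CSH rh else c) = c ∨
      (G □ H).Adj c (if copNext CSG CSH rh = c ∨ (G □ H).Adj c (copNext CSG CSH rh) then
        copNext CSG CSH rh else c)
  by_cases h : copNext CSG CSH rh = c ∨ (G □ H).Adj c (copNext CSG CSH rh)
  · rw [if_pos h]
    rcases h with h | h
    · exact Or.inl h
    · exact Or.inr h
  · rw [if_neg h]; exact Or.inl rfl

section Seq
variable (r : ℕ → α × β)

/-- The robber history list after round `k`. -/
def Rl : ℕ → List (α × β)
  | 0 => [r 0]
  | k + 1 => r (k + 1) :: Rl k

noncomputable def nG (k : ℕ) : ℕ := (gseq (Rl r k)).length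
noncomputable def nH (k : ℕ) : ℕ := (hseq (Rl r k)).length

lemma Rl_cons (k : ℕ) : ∃ t, Rl r k = r k :: t := by
  cases k with
  | zero => exact ⟨[], rfl⟩
  | succ k => exact ⟨Rl r k, rfl⟩

lemma gseq_head : ∀ (L : List (α × β)) (x : α × β), (gseq (x :: L)).head! = x.1 := by
  intro L
  induction L with
  | nil => intro x; rfl
  | cons s t ih =>
    intro x
    by_cases h : x.1 = s.1
    · rw [show gseq (x :: s :: t) = gseq (s :: t) from by simp [gseq, h]]
      rw [ih s, h]
    · rw [show gseq (x :: s :: t) = x.1 :: gseq (s :: t) from by simp [gseq, h]]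
      rfl

lemma gseq_Rl_head (k : ℕ) : (gseq (Rl r k)).head! = (r k).1 := by
  obtain ⟨t, ht⟩ := Rl_cons r k
  rw [ht, gseq_head]

lemma gseq_grow (k : ℕ) :
    gseq (Rl r (k + 1)) =
      if (r (k + 1)).1 = (r k).1 then gseq (Rl r k)
      else (r (k + 1)).1 :: gseq (Rl r k) := by
  obtain ⟨t, ht⟩ := Rl_cons r k
  show gseq (r (k+1) :: Rl r k) = _
  rw [ht]
  by_cases h : (r (k+1)).1 = (r k).1
  · simp [gseq, h]
  · simp [gseq, h]

lemma hseq_grow (k : ℕ) :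
    hseq (Rl r (k + 1)) =
      if (r (k + 1)).1 = (r k).1 then (r (k + 1)).2 :: hseq (Rl r k)
      else hseq (Rl r k) := by
  obtain ⟨t, ht⟩ := Rl_cons r k
  show hseq (r (k+1) :: Rl r k) = _
  rw [ht]
  by_cases h : (r (k+1)).1 = (r k).1
  · simp [hseq, h]
  · simp [hseq, h]

lemma gseq_Rl_ne (k : ℕ) : gseq (Rl r k) ≠ [] := by
  induction k with
  | zero => simp [Rl, gseq]
  | succ k ih =>
    rw [gseq_grow]
    by_cases h : (r (k+1)).1 = (r k).1
    · simpa [h] using ih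
    · simp [h]

lemma nG_pos (k : ℕ) : 1 ≤ nG r k := by
  have := gseq_Rl_ne r k
  rw [nG]
  cases hg : gseq (Rl r k) with
  | nil => exact absurd hg this
  | cons a t => simp

lemma gseq_suffix {k k' : ℕ} (h : k ≤ k') : gseq (Rl r k) <:+ gseq (Rl r k') := by
  induction k' with
  | zero => rw [Nat.le_zero.mp h]
  | succ k' ih =>
    rcases Nat.lt_or_ge k (k' + 1) with h' | h'
    · have h2 := ih (by omega)
      rw [gseq_grow]
      by_cases he : (r (k'+1)).1 = (r k').1
      · simpa [he] using h2
      · simp only [he, if_false]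
        exact h2.trans (List.suffix_cons _ _)
    · rw [show k = k' + 1 by omega]

lemma hseq_suffix {k k' : ℕ} (h : k ≤ k') : hseq (Rl r k) <:+ hseq (Rl r k') := by
  induction k' with
  | zero => rw [Nat.le_zero.mp h]
  | succ k' ih =>
    rcases Nat.lt_or_ge k (k' + 1) with h' | h'
    · have h2 := ih (by omega)
      rw [hseq_grow]
      by_cases he : (r (k'+1)).1 = (r k').1
      · simp only [he, if_true]
        exact h2.trans (List.suffix_cons _ _)
      · simpa [he] using h2
    · rw [show k = k' + 1 by omega]

lemma nG_mono {k k' : ℕ} (h : k ≤ k') : nG r k ≤ nG r k' :=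
  (gseq_suffix r h).length_le

lemma nH_mono {k k' : ℕ} (h : k ≤ k') : nH r k ≤ nH r k' :=
  (hseq_suffix r h).length_le

lemma gseq_stab {k k' : ℕ} (h : k ≤ k') (hn : nG r k = nG r k') :
    gseq (Rl r k) = gseq (Rl r k') :=
  (gseq_suffix r h).eq_of_length hn

lemma hseq_stab {k k' : ℕ} (h : k ≤ k') (hn : nH r k = nH r k') :
    hseq (Rl r k) = hseq (Rl r k') :=
  (hseq_suffix r h).eq_of_length hn

lemma nG_succ_le (k : ℕ) : nG r (k+1) ≤ nG r k + 1 := by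
  rw [nG, nG, gseq_grow]
  by_cases h : (r (k+1)).1 = (r k).1 <;> simp [h]

lemma nH_succ_le (k : ℕ) : nH r (k+1) ≤ nH r k + 1 := by
  rw [nH, nH, hseq_grow]
  by_cases h : (r (k+1)).1 = (r k).1 <;> simp [h]

/-- The simulated G-robber sequence. -/
noncomputable def seqG : ℕ → α
  | 0 => (r 0).1
  | j + 1 =>
    if h : ∃ k, j + 2 ≤ nG r k then (gseq (Rl r (Nat.find h))).head! else seqG j

/-- The simulated H-robber sequence. -/
noncomputable def seqH : ℕ → β
  | 0 => if h : ∃ k, 1 ≤ nH r k then (hseq (Rl r (Nat.find h))).head! else (r 0).2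
  | j + 1 =>
    if h : ∃ k, j + 2 ≤ nH r k then (hseq (Rl r (Nat.find h))).head! else seqH j

lemma nG_zero : nG r 0 = 1 := rfl
lemma nH_zero : nH r 0 = 0 := rfl

lemma gseq_eq_glist : ∀ k, gseq (Rl r k) = glist (seqG r) (nG r k) := by
  intro k
  induction k with
  | zero => rfl
  | succ k ih =>
    by_cases he : (r (k+1)).1 = (r k).1
    · have h1 : gseq (Rl r (k+1)) = gseq (Rl r k) := by rw [gseq_grow, if_pos he]
      have h2 : nG r (k+1) = nG r k := by rw [nG, nG, h1]
      rw [h1, h2, ih]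
    · have h1 : gseq (Rl r (k+1)) = (r (k+1)).1 :: gseq (Rl r k) := by
        rw [gseq_grow, if_neg he]
      have h2 : nG r (k+1) = nG r k + 1 := by rw [nG, nG, h1]; rfl
      obtain ⟨j, hj⟩ : ∃ j, nG r k = j + 1 := ⟨nG r k - 1, by have := nG_pos r k; omega⟩
      have hex : ∃ k', j + 2 ≤ nG r k' := ⟨k+1, by omega⟩
      have hval : seqG r (j+1) = (gseq (Rl r (Nat.find hex))).head! := by
        have hunf : seqG r (j+1) = if h : ∃ k', j + 2 ≤ nG r k' then
            (gseq (Rl r (Nat.find h))).head! else seqG r j := rfl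
        rw [hunf, dif_pos hex]
      have hfle : Nat.find hex ≤ k + 1 := Nat.find_le (by omega)
      have hfspec : j + 2 ≤ nG r (Nat.find hex) := Nat.find_spec hex
      have hle2 : nG r (Nat.find hex) ≤ nG r (k+1) := nG_mono r hfle
      have heq : nG r (Nat.find hex) = nG r (k+1) := by omega
      have hlists : gseq (Rl r (Nat.find hex)) = gseq (Rl r (k+1)) := gseq_stab r hfle heq
      have hhead : seqG r (j+1) = (r (k+1)).1 := by
        rw [hval, hlists, gseq_Rl_head]
      rw [h1, h2, hj]
      show (r (k+1)).1 :: gseq (Rl r k) = seqG r (j+1) :: glist (seqG r) (j+1)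
      rw [hhead, ih, hj]

lemma seqG_val (k : ℕ) : seqG r (nG r k - 1) = (r k).1 := by
  obtain ⟨j, hj⟩ : ∃ j, nG r k = j + 1 := ⟨nG r k - 1, by have := nG_pos r k; omega⟩
  have h1 := gseq_eq_glist r k
  rw [hj] at h1
  have h2 := gseq_Rl_head r k
  rw [h1] at h2
  rw [hj]
  simpa [glist] using h2

lemma hseq_eq_glist : ∀ k, hseq (Rl r k) = glist (seqH r) (nH r k) := by
  intro k
  induction k with
  | zero => rfl
  | succ k ih =>
    by_cases he : (r (k+1)).1 = (r k).1
    · have h1 : hseq (Rl r (k+1)) = (r (k+1)).2 :: hseq (Rl r k) := by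
        rw [hseq_grow, if_pos he]
      have h2 : nH r (k+1) = nH r k + 1 := by rw [nH, nH, h1]; rfl
      have hkey : seqH r (nH r k) = (r (k+1)).2 := by
        cases hn : nH r k with
        | zero =>
          have hex : ∃ k', 1 ≤ nH r k' := ⟨k+1, by omega⟩
          have hunf : seqH r 0 = if h : ∃ k', 1 ≤ nH r k' then
              (hseq (Rl r (Nat.find h))).head! else (r 0).2 := rfl
          have hfle : Nat.find hex ≤ k + 1 := Nat.find_le (by omega)
          have hfspec : 1 ≤ nH r (Nat.find hex) := Nat.find_spec hex
          have hle2 : nH r (Nat.find hex) ≤ nH r (k+1) := nH_mono r hfle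
          have heq : nH r (Nat.find hex) = nH r (k+1) := by omega
          have hlists : hseq (Rl r (Nat.find hex)) = hseq (Rl r (k+1)) := hseq_stab r hfle heq
          rw [hunf, dif_pos hex, hlists, h1]
          rfl
        | succ j =>
          have hex : ∃ k', j + 2 ≤ nH r k' := ⟨k+1, by omega⟩
          have hunf : seqH r (j+1) = if h : ∃ k', j + 2 ≤ nH r k' then
              (hseq (Rl r (Nat.find h))).head! else seqH r j := rfl
          have hfle : Nat.find hex ≤ k + 1 := Nat.find_le (by omega)
          have hfspec : j + 2 ≤ nH r (Nat.find hex) := Nat.find_spec hex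
          have hle2 : nH r (Nat.find hex) ≤ nH r (k+1) := nH_mono r hfle
          have heq : nH r (Nat.find hex) = nH r (k+1) := by omega
          have hlists : hseq (Rl r (Nat.find hex)) = hseq (Rl r (k+1)) := hseq_stab r hfle heq
          rw [hunf, dif_pos hex, hlists, h1]
          rfl
      rw [h1, h2, ih, ← hkey]
      rfl
    · have h1 : hseq (Rl r (k+1)) = hseq (Rl r k) := by rw [hseq_grow, if_neg he]
      have h2 : nH r (k+1) = nH r k := by rw [nH, nH, h1]
      rw [h1, h2, ih]

section WithStep
variable {G : SimpleGraph α} {H : SimpleGraph β}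

lemma step_g (hstep : ∀ k, r (k+1) = r k ∨ (G □ H).Adj (r k) (r (k+1)))
    {k : ℕ} (h : (r (k+1)).1 ≠ (r k).1) :
    G.Adj (r k).1 (r (k+1)).1 ∧ (r (k+1)).2 = (r k).2 := by
  rcases hstep k with he | he
  · exact absurd (by rw [he]) h
  · rw [SimpleGraph.boxProd_adj] at he
    rcases he with ⟨hadj, hsnd⟩ | ⟨_, hfst⟩
    · exact ⟨hadj, hsnd.symm⟩
    · exact absurd hfst.symm h

lemma step_h (hstep : ∀ k, r (k+1) = r k ∨ (G □ H).Adj (r k) (r (k+1)))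
    {k : ℕ} (h : (r (k+1)).1 = (r k).1) :
    (r (k+1)).2 = (r k).2 ∨ H.Adj (r k).2 (r (k+1)).2 := by
  rcases hstep k with he | he
  · rw [he]; exact Or.inl rfl
  · rw [SimpleGraph.boxProd_adj] at he
    rcases he with ⟨hadj, _⟩ | ⟨hadj, _⟩
    · rw [h] at hadj
      exact absurd hadj G.irrefl
    · exact Or.inr hadj

lemma hseq_head (hstep : ∀ k, r (k+1) = r k ∨ (G □ H).Adj (r k) (r (k+1))) :
    ∀ k, hseq (Rl r k) ≠ [] → (hseq (Rl r k)).head! = (r k).2 := by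
  intro k
  induction k with
  | zero => intro h; exact absurd rfl h
  | succ k ih =>
    by_cases he : (r (k+1)).1 = (r k).1
    · rw [hseq_grow, if_pos he]
      intro _
      rfl
    · rw [hseq_grow, if_neg he]
      intro hne
      rw [ih hne, ← (step_g r hstep he).2]

lemma r_snd_of_nH_zero (hstep : ∀ k, r (k+1) = r k ∨ (G □ H).Adj (r k) (r (k+1))) :
    ∀ k, nH r k = 0 → (r k).2 = (r 0).2 := by
  intro k
  induction k with
  | zero => intro _; rfl
  | succ k ih =>
    intro h0
    by_cases he : (r (k+1)).1 = (r k).1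
    · exfalso
      have : nH r (k+1) = nH r k + 1 := by
        rw [nH, nH, hseq_grow, if_pos he]; rfl
      omega
    · have h1 : nH r (k+1) = nH r k := by rw [nH, nH, hseq_grow, if_neg he]
      rw [(step_g r hstep he).2, ih (by omega)]

lemma seqG_leg (hstep : ∀ k, r (k+1) = r k ∨ (G □ H).Adj (r k) (r (k+1))) (j : ℕ) :
    seqG r (j+1) = seqG r j ∨ G.Adj (seqG r j) (seqG r (j+1)) := by
  have hunf : seqG r (j+1) = if h : ∃ k', j + 2 ≤ nG r k' then
      (gseq (Rl r (Nat.find h))).head! else seqG r j := rfl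
  by_cases hex : ∃ k', j + 2 ≤ nG r k'
  · rw [hunf, dif_pos hex]
    set k0 := Nat.find hex with hk0
    have hspec : j + 2 ≤ nG r k0 := Nat.find_spec hex
    obtain ⟨k1, hk1⟩ : ∃ k1, k0 = k1 + 1 := by
      refine ⟨k0 - 1, ?_⟩
      have : k0 ≠ 0 := by
        intro h
        rw [h, nG_zero] at hspec
        omega
      omega
    have hmin : ¬ (j + 2 ≤ nG r k1) := Nat.find_min hex (by omega)
    have hsucc : nG r (k1+1) ≤ nG r k1 + 1 := nG_succ_le r k1
    rw [← hk1] at hsucc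
    have hn1 : nG r k1 = j + 1 := by omega
    have he : (r k0).1 ≠ (r k1).1 := by
      intro h
      have : nG r (k1+1) = nG r k1 := by
        rw [nG, nG, gseq_grow, hk1] at *
        rw [if_pos h]
      rw [← hk1] at this
      omega
    rw [hk1] at he
    have hadj := (step_g r hstep he).1
    have hv1 : seqG r j = (r k1).1 := by
      have := seqG_val r k1
      rw [hn1] at this
      simpa using this
    rw [gseq_Rl_head, hv1]
    right
    rw [hk1]
    exact hadj
  · rw [hunf, dif_neg hex]
    exact Or.inl rfl

lemma seqH_val (hstep : ∀ k, r (k+1) = r k ∨ (G □ H).Adj (r k) (r (k+1)))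
    (k : ℕ) (h : 1 ≤ nH r k) : seqH r (nH r k - 1) = (r k).2 := by
  obtain ⟨j, hj⟩ : ∃ j, nH r k = j + 1 := ⟨nH r k - 1, by omega⟩
  have h1 := hseq_eq_glist r k
  rw [hj] at h1
  have hne : hseq (Rl r k) ≠ [] := by
    rw [h1]; simp [glist]
  have h2 := hseq_head r hstep k hne
  rw [h1] at h2
  rw [hj]
  simpa [glist] using h2

lemma seqH_leg (hstep : ∀ k, r (k+1) = r k ∨ (G □ H).Adj (r k) (r (k+1))) (j : ℕ) :
    seqH r (j+1) = seqH r j ∨ H.Adj (seqH r j) (seqH r (j+1)) := by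
  have hunf : seqH r (j+1) = if h : ∃ k', j + 2 ≤ nH r k' then
      (hseq (Rl r (Nat.find h))).head! else seqH r j := rfl
  by_cases hex : ∃ k', j + 2 ≤ nH r k'
  · rw [hunf, dif_pos hex]
    set k0 := Nat.find hex with hk0
    have hspec : j + 2 ≤ nH r k0 := Nat.find_spec hex
    obtain ⟨k1, hk1⟩ : ∃ k1, k0 = k1 + 1 := by
      refine ⟨k0 - 1, ?_⟩
      have : k0 ≠ 0 := by
        intro h
        rw [h, nH_zero] at hspec
        omega
      omega
    have hmin : ¬ (j + 2 ≤ nH r k1) := Nat.find_min hex (by omega)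
    have hsucc : nH r (k1+1) ≤ nH r k1 + 1 := nH_succ_le r k1
    rw [← hk1] at hsucc
    have hn1 : nH r k1 = j + 1 := by omega
    have he : (r k0).1 = (r k1).1 := by
      by_contra h
      rw [hk1] at h
      have : nH r (k1+1) = nH r k1 := by
        rw [nH, nH, hseq_grow, if_neg h]
      rw [← hk1] at this
      omega
    rw [hk1] at he
    have hne : hseq (Rl r k0) ≠ [] := by
      rw [nH] at hspec
      intro hc
      rw [hc] at hspec
      simp at hspec
    have hv0 : (hseq (Rl r k0)).head! = (r k0).2 := hseq_head r hstep k0 hne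
    have hv1 : seqH r j = (r k1).2 := by
      have := seqH_val r hstep k1 (by omega)
      rw [hn1] at this
      simpa using this
    rw [hv0, hv1, hk1]
    rcases step_h r hstep he with h | h
    · exact Or.inl h
    · exact Or.inr h
  · rw [hunf, dif_neg hex]
    exact Or.inl rfl

end WithStep

section Intended
variable {G : SimpleGraph α} {H : SimpleGraph β}
variable (CSG : CopStrategy α) (CSH : CopStrategy β)

/-- The intended cop trajectory, as a function of the robber trajectory. -/
noncomputable def cI : ℕ → α × β
  | 0 => (CSG.init, CSH.init)
  | k + 1 => copNext CSG CSH (Rl r k)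

lemma cI_fst (k : ℕ) : (cI r CSG CSH (k+1)).1 = target CSG (gseq (Rl r k)) := rfl
lemma cI_snd (k : ℕ) : (cI r CSG CSH (k+1)).2 = target CSH (hseq (Rl r k)) := rfl

lemma cI_step (hCSG : CSG.Legal G) (hCSH : CSH.Legal H)
    (hstep : ∀ k, r (k+1) = r k ∨ (G □ H).Adj (r k) (r (k+1))) (k : ℕ) :
    cI r CSG CSH (k+1) = cI r CSG CSH k ∨
      (G □ H).Adj (cI r CSG CSH k) (cI r CSG CSH (k+1)) := by
  cases k with
  | zero =>
    have h1 : cI r CSG CSH 1 = (target CSG [(r 0).1], CSH.init) := rfl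
    have h0 : cI r CSG CSH 0 = (CSG.init, CSH.init) := rfl
    rw [h1, h0]
    rcases target_nil_step hCSG (r 0).1 with h | h
    · left; rw [h]
    · right
      rw [SimpleGraph.boxProd_adj]
      exact Or.inl ⟨h, rfl⟩
  | succ k =>
    have h2 : cI r CSG CSH (k+2) =
        (target CSG (gseq (Rl r (k+1))), target CSH (hseq (Rl r (k+1)))) := rfl
    have h1 : cI r CSG CSH (k+1) =
        (target CSG (gseq (Rl r k)), target CSH (hseq (Rl r k))) := rfl
    rw [h2, h1]
    by_cases he : (r (k+1)).1 = (r k).1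
    · -- h-event: the α-coordinate of the simulation history is unchanged
      have hg : gseq (Rl r (k+1)) = gseq (Rl r k) := by rw [gseq_grow, if_pos he]
      have hh : hseq (Rl r (k+1)) = (r (k+1)).2 :: hseq (Rl r k) := by
        rw [hseq_grow, if_pos he]
      rw [hg, hh]
      cases hn : hseq (Rl r k) with
      | nil =>
        have ht : target CSH ([] : List β) = CSH.init := rfl
        rw [ht]
        rcases target_nil_step hCSH (r (k+1)).2 with h | h
        · left; rw [h]
        · right
          rw [SimpleGraph.boxProd_adj]
          exact Or.inr ⟨h, rfl⟩
      | cons b t =>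
        have hb : b = (r k).2 := by
          have := hseq_head r hstep k (by rw [hn]; simp)
          rw [hn] at this
          simpa using this
        have hx : (r (k+1)).2 = b ∨ H.Adj b (r (k+1)).2 := by
          rw [hb]
          exact step_h r hstep he
        rcases target_cons_step hCSH (r (k+1)).2 b t hx with h | h
        · left; rw [h]
        · right
          rw [SimpleGraph.boxProd_adj]
          exact Or.inr ⟨h, rfl⟩
    · -- g-event
      have hg : gseq (Rl r (k+1)) = (r (k+1)).1 :: gseq (Rl r k) := by
        rw [gseq_grow, if_neg he]
      have hh : hseq (Rl r (k+1)) = hseq (Rl r k) := by rw [hseq_grow, if_neg he]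
      rw [hg, hh]
      cases hn : gseq (Rl r k) with
      | nil => exact absurd hn (gseq_Rl_ne r k)
      | cons b t =>
        have hb : b = (r k).1 := by
          have := gseq_Rl_head r k
          rw [hn] at this
          simpa using this
        have hx : (r (k+1)).1 = b ∨ G.Adj b (r (k+1)).1 := by
          rw [hb]
          exact Or.inr (step_g r hstep he).1
        rcases target_cons_step hCSG (r (k+1)).1 b t hx with h | h
        · left; rw [h]
        · right
          rw [SimpleGraph.boxProd_adj]
          exact Or.inl ⟨h, rfl⟩

end Intended

end Seq
section Bridge
variable {G : SimpleGraph α} {H : SimpleGraph β}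
variable (CSG : CopStrategy α) (CSH : CopStrategy β) (RS : RobberStrategy (α × β))

lemma Rl_hist (CS : CopStrategy (α × β)) :
    ∀ k, (play CS RS k).2.1 :: (play CS RS k).2.2.2 = Rl (robPos CS RS) k := by
  intro k
  induction k with
  | zero => rfl
  | succ k ih =>
    show (play CS RS (k+1)).2.1 :: (play CS RS (k+1)).2.2.2 =
      robPos CS RS (k+1) :: Rl (robPos CS RS) k
    rw [← ih]
    rfl

lemma robStep (CS : CopStrategy (α × β)) (hRS : RS.Legal (G □ H)) (k : ℕ) :
    robPos CS RS (k+1) = robPos CS RS k ∨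
      (G □ H).Adj (robPos CS RS k) (robPos CS RS (k+1)) := by
  exact hRS (play CS RS k).2.1
    (CS.move ((play CS RS k).1 :: (play CS RS k).2.2.1)
      ((play CS RS k).2.1 :: (play CS RS k).2.2.2) :: (play CS RS k).1 :: (play CS RS k).2.2.1)
    (play CS RS k).2.2.2

lemma copPos_eq_cI (hCSG : CSG.Legal G) (hCSH : CSH.Legal H) (hRS : RS.Legal (G □ H)) :
    ∀ k, copPos (prodCS G H CSG CSH) RS k =
      cI (robPos (prodCS G H CSG CSH) RS) CSG CSH k := by
  have hstep : ∀ k, robPos (prodCS G H CSG CSH) RS (k+1) = robPos (prodCS G H CSG CSH) RS k ∨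
      (G □ H).Adj (robPos (prodCS G H CSG CSH) RS k) (robPos (prodCS G H CSG CSH) RS (k+1)) :=
    fun k => robStep RS (prodCS G H CSG CSH) hRS k
  intro k
  induction k with
  | zero => rfl
  | succ k ih =>
    have hmv : copPos (prodCS G H CSG CSH) RS (k+1) =
        (prodCS G H CSG CSH).move
          ((play (prodCS G H CSG CSH) RS k).1 :: (play (prodCS G H CSG CSH) RS k).2.2.1)
          ((play (prodCS G H CSG CSH) RS k).2.1 :: (play (prodCS G H CSG CSH) RS k).2.2.2) := rfl
    rw [hmv, Rl_hist]
    show (if copNext CSG CSH (Rl (robPos (prodCS G H CSG CSH) RS) k) =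
            (play (prodCS G H CSG CSH) RS k).1 ∨
          (G □ H).Adj ((play (prodCS G H CSG CSH) RS k).1)
            (copNext CSG CSH (Rl (robPos (prodCS G H CSG CSH) RS) k))
        then copNext CSG CSH (Rl (robPos (prodCS G H CSG CSH) RS) k)
        else (play (prodCS G H CSG CSH) RS k).1) = _
    have hplay1 : (play (prodCS G H CSG CSH) RS k).1 =
        cI (robPos (prodCS G H CSG CSH) RS) CSG CSH k := ih
    rw [hplay1]
    have hcond := cI_step (robPos (prodCS G H CSG CSH) RS) CSG CSH hCSG hCSH hstep k
    have hcond' : copNext CSG CSH (Rl (robPos (prodCS G H CSG CSH) RS) k) =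
          cI (robPos (prodCS G H CSG CSH) RS) CSG CSH k ∨
        (G □ H).Adj (cI (robPos (prodCS G H CSG CSH) RS) CSG CSH k)
          (copNext CSG CSH (Rl (robPos (prodCS G H CSG CSH) RS) k)) := hcond
    rw [if_pos hcond']
    rfl

end Bridge

section Formulas
variable {G : SimpleGraph α} {H : SimpleGraph β}
variable (r : ℕ → α × β) (CSG : CopStrategy α) (CSH : CopStrategy β)

lemma cI_fst_formula (k j : ℕ) (hj : nG r k = j + 1) :
    (cI r CSG CSH (k+1)).1 =
      if aliveL CSG (glist (seqG r) (j+1)) then simSeq CSG (seqG r) (j+1) else seqG r j := by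
  rw [cI_fst, gseq_eq_glist, hj, target_glist]

lemma cI_snd_formula0 (k : ℕ) (h : nH r k = 0) : (cI r CSG CSH (k+1)).2 = CSH.init := by
  rw [cI_snd, hseq_eq_glist, h]
  rfl

lemma cI_snd_formula (k j : ℕ) (hj : nH r k = j + 1) :
    (cI r CSG CSH (k+1)).2 =
      if aliveL CSH (glist (seqH r) (j+1)) then simSeq CSH (seqH r) (j+1) else seqH r j := by
  rw [cI_snd, hseq_eq_glist, hj, target_glist]

end Formulas

section Analysis
variable {G : SimpleGraph α} {H : SimpleGraph β}
variable (r : ℕ → α × β) (CSG : CopStrategy α) (CSH : CopStrategy β)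

/-- Rounds at which the cop's α-coordinate coincides with the robber's. -/
def Sa : Set ℕ :=
  {k | (cI r CSG CSH k).1 = (r k).1 ∨ (cI r CSG CSH (k+1)).1 = (r k).1}

/-- Rounds (after the start of the H-simulation) at which the β-coordinates coincide. -/
def Sb : Set ℕ :=
  {k | 1 ≤ nH r k ∧
    ((cI r CSG CSH k).2 = (r k).2 ∨ (cI r CSG CSH (k+1)).2 = (r k).2)}

lemma nG_succ_cases (k : ℕ) : nG r (k+1) = nG r k ∨ nG r (k+1) = nG r k + 1 := by
  rw [nG, nG, gseq_grow]
  by_cases h : (r (k+1)).1 = (r k).1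
  · rw [if_pos h]; exact Or.inl rfl
  · rw [if_neg h]; exact Or.inr rfl

lemma nH_succ_cases (k : ℕ) : nH r (k+1) = nH r k ∨ nH r (k+1) = nH r k + 1 := by
  rw [nH, nH, hseq_grow]
  by_cases h : (r (k+1)).1 = (r k).1
  · rw [if_pos h]; exact Or.inr rfl
  · rw [if_neg h]; exact Or.inl rfl

lemma r_fst_eq (m jm : ℕ) (h : nG r m = jm + 1) : (r m).1 = seqG r jm := by
  have := seqG_val r m
  rw [h] at this
  simpa using this.symm

/-- After any real α-coincidence, the cop's α-coordinate shadows the robber's α. -/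
lemma mode2G (k : ℕ) (hk : ∃ k' ≤ k, k' ∈ Sa r CSG CSH) :
    (cI r CSG CSH (k+1)).1 = (r k).1 := by
  obtain ⟨j, hj⟩ : ∃ j, nG r k = j + 1 := ⟨nG r k - 1, by have := nG_pos r k; omega⟩
  have hrk : (r k).1 = seqG r j := r_fst_eq r k j hj
  by_cases hal : aliveL CSG (glist (seqG r) (j+1))
  swap
  · rw [cI_fst_formula r CSG CSH k j hj, if_neg hal, hrk]
  · rw [cI_fst_formula r CSG CSH k j hj, if_pos hal, hrk]
    obtain ⟨k', hk'le, hk'⟩ := hk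
    rcases hk' with hf1 | hf2
    · -- form 1 : (cI k').1 = (r k').1
      cases k' with
      | zero =>
        exfalso
        have h0 : (cI r CSG CSH 0).1 = simSeq CSG (seqG r) 0 := rfl
        have h1 : (r 0).1 = seqG r 0 := rfl
        rw [h0, h1] at hf1
        exact alive_no_failI CSG (seqG r) hal (Nat.zero_le j) hf1
      | succ m' =>
        obtain ⟨j2, hj2⟩ : ∃ j2, nG r m' = j2 + 1 :=
          ⟨nG r m' - 1, by have := nG_pos r m'; omega⟩
        have hn2le : nG r m' ≤ nG r k := nG_mono r (by omega)
        have hal2 : aliveL CSG (glist (seqG r) (j2+1)) :=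
          alive_anti CSG (seqG r) (show j2+1 ≤ j+1 by omega) (by omega) hal
        rw [cI_fst_formula r CSG CSH m' j2 hj2, if_pos hal2] at hf1
        rcases nG_succ_cases r m' with hc | hc
        · -- no α-move at round m'+1
          have : (r (m'+1)).1 = seqG r j2 := r_fst_eq r (m'+1) j2 (by omega)
          rw [this] at hf1
          -- hf1 : simSeq (j2+1) = seqG j2 : type-ii failure at j2
          rcases Nat.lt_or_ge j2 j with hlt | hge
          · exact absurd hf1 (alive_no_failII CSG (seqG r) hal hlt)
          · have hj2j : j2 = j := by
              have : nG r (m'+1) ≤ nG r k := nG_mono r (by omega)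
              omega
            rw [hj2j] at hf1
            exact hf1
        · -- α-move at round m'+1
          have hlev : nG r (m'+1) = j2 + 2 := by omega
          have : (r (m'+1)).1 = seqG r (j2+1) := r_fst_eq r (m'+1) (j2+1) (by omega)
          rw [this] at hf1
          -- type-i failure at j2+1
          have hle : j2 + 1 ≤ j := by
            have : nG r (m'+1) ≤ nG r k := nG_mono r (by omega)
            omega
          exact absurd hf1 (alive_no_failI CSG (seqG r) hal hle)
    · -- form 2 : (cI (k'+1)).1 = (r k').1
      obtain ⟨j3, hj3⟩ : ∃ j3, nG r k' = j3 + 1 :=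
        ⟨nG r k' - 1, by have := nG_pos r k'; omega⟩
      have hn3le : nG r k' ≤ nG r k := nG_mono r hk'le
      have hal3 : aliveL CSG (glist (seqG r) (j3+1)) :=
        alive_anti CSG (seqG r) (show j3+1 ≤ j+1 by omega) (by omega) hal
      rw [cI_fst_formula r CSG CSH k' j3 hj3, if_pos hal3, r_fst_eq r k' j3 hj3] at hf2
      rcases Nat.lt_or_ge j3 j with hlt | hge
      · exact absurd hf2 (alive_no_failII CSG (seqG r) hal hlt)
      · have : j3 = j := by omega
        rw [this] at hf2
        exact hf2

section WithStepH
variable (hstep : ∀ k, r (k+1) = r k ∨ (G □ H).Adj (r k) (r (k+1)))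
include hstep

lemma r_snd_eq (m jm : ℕ) (h : nH r m = jm + 1) : (r m).2 = seqH r jm := by
  have := seqH_val r hstep m (by omega)
  rw [h] at this
  simpa using this.symm

/-- After any real β-coincidence (post H-start), the cop's β shadows the robber's β. -/
lemma mode2H (k : ℕ) (hk : ∃ k' ≤ k, k' ∈ Sb r CSG CSH) :
    (cI r CSG CSH (k+1)).2 = (r k).2 := by
  obtain ⟨k', hk'le, hk'pos, hk'⟩ := hk
  have hkpos : 1 ≤ nH r k := le_trans hk'pos (nH_mono r hk'le)
  obtain ⟨j, hj⟩ : ∃ j, nH r k = j + 1 := ⟨nH r k - 1, by omega⟩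
  have hrk : (r k).2 = seqH r j := r_snd_eq r hstep k j hj
  by_cases hal : aliveL CSH (glist (seqH r) (j+1))
  swap
  · rw [cI_snd_formula r CSG CSH k j hj, if_neg hal, hrk]
  · rw [cI_snd_formula r CSG CSH k j hj, if_pos hal, hrk]
    rcases hk' with hf1 | hf2
    · -- form 1 : (cI k').2 = (r k').2
      cases k' with
      | zero =>
        exfalso
        rw [nH_zero] at hk'pos
        omega
      | succ m' =>
        cases hn2 : nH r m' with
        | zero =>
          have hn3 : nH r (m'+1) = 1 := by
            rcases nH_succ_cases r m' with hc | hc <;> omega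
          have hcv : (cI r CSG CSH (m'+1)).2 = simSeq CSH (seqH r) 0 :=
            cI_snd_formula0 r CSG CSH m' hn2
          rw [hcv, r_snd_eq r hstep (m'+1) 0 hn3] at hf1
          exact absurd hf1 (alive_no_failI CSH (seqH r) hal (Nat.zero_le j))
        | succ j2 =>
          have hn2le : nH r m' ≤ nH r k := nH_mono r (by omega)
          have hal2 : aliveL CSH (glist (seqH r) (j2+1)) :=
            alive_anti CSH (seqH r) (show j2+1 ≤ j+1 by omega) (by omega) hal
          rw [cI_snd_formula r CSG CSH m' j2 hn2, if_pos hal2] at hf1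
          rcases nH_succ_cases r m' with hc | hc
          · have : (r (m'+1)).2 = seqH r j2 := r_snd_eq r hstep (m'+1) j2 (by omega)
            rw [this] at hf1
            rcases Nat.lt_or_ge j2 j with hlt | hge
            · exact absurd hf1 (alive_no_failII CSH (seqH r) hal hlt)
            · have hj2j : j2 = j := by
                have : nH r (m'+1) ≤ nH r k := nH_mono r (by omega)
                omega
              rw [hj2j] at hf1
              exact hf1
          · have : (r (m'+1)).2 = seqH r (j2+1) := r_snd_eq r hstep (m'+1) (j2+1) (by omega)
            rw [this] at hf1
            have hle : j2 + 1 ≤ j := by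
              have : nH r (m'+1) ≤ nH r k := nH_mono r (by omega)
              omega
            exact absurd hf1 (alive_no_failI CSH (seqH r) hal hle)
    · -- form 2 : (cI (k'+1)).2 = (r k').2
      obtain ⟨j3, hj3⟩ : ∃ j3, nH r k' = j3 + 1 := ⟨nH r k' - 1, by omega⟩
      have hn3le : nH r k' ≤ nH r k := nH_mono r hk'le
      have hal3 : aliveL CSH (glist (seqH r) (j3+1)) :=
        alive_anti CSH (seqH r) (show j3+1 ≤ j+1 by omega) (by omega) hal
      rw [cI_snd_formula r CSG CSH k' j3 hj3, if_pos hal3, r_snd_eq r hstep k' j3 hj3] at hf2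
      rcases Nat.lt_or_ge j3 j with hlt | hge
      · exact absurd hf2 (alive_no_failII CSH (seqH r) hal hlt)
      · have : j3 = j := by omega
        rw [this] at hf2
        exact hf2

lemma mainH (hC : ∀ e ∈ Sb r CSG CSH, ∃ k' ∈ Sa r CSG CSH, k' ≤ e) (s : ℕ)
    (hclean : ∀ kk ≤ s, cI r CSG CSH kk ≠ r kk ∧ cI r CSG CSH (kk+1) ≠ r kk) :
    (r s).2 = (r 0).2 ∨ Damages CSH (mkRob H (seqH r)) ((r s).2) := by
  cases hns0 : nH r s with
  | zero => exact Or.inl (r_snd_of_nH_zero r hstep s hns0)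
  | succ j =>
    right
    have hns : nH r s = j + 1 := hns0
    have hsv : (r s).2 = seqH r j := r_snd_eq r hstep s j hns
    rw [hsv]
    have hlegH : ∀ i, seqH r (i+1) = seqH r i ∨ H.Adj (seqH r i) (seqH r (i+1)) :=
      seqH_leg r hstep
    refine ⟨j, robPos_mkRob CSH H (seqH r) hlegH j, ?_⟩
    intro kk hkk
    simp only [copPos_mkRob CSH H (seqH r) hlegH, robPos_mkRob CSH H (seqH r) hlegH]
    by_contra hcon
    have hkkfail : failP CSH (seqH r) kk := by
      rw [failP]
      by_contra hno
      push_neg at hno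
      exact hcon ⟨hno.1, hno.2⟩
    have hfail : ∃ i, failP CSH (seqH r) i := ⟨kk, hkkfail⟩
    obtain ⟨khat, hkhatspec, hkhatmin⟩ :
        ∃ i, failP CSH (seqH r) i ∧ ∀ i' < i, ¬ failP CSH (seqH r) i' :=
      ⟨Nat.find hfail, Nat.find_spec hfail, fun i' h => Nat.find_min hfail h⟩
    have hkhatle : khat ≤ j := by
      have : khat ≤ kk := by
        by_contra h
        push_neg at h
        exact hkhatmin kk h hkkfail
      omega
    have hex : ∃ kr, khat + 1 ≤ nH r kr := ⟨s, by omega⟩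
    obtain ⟨e, hespec, hemin⟩ :
        ∃ e, (khat + 1 ≤ nH r e) ∧ ∀ e' < e, ¬ (khat + 1 ≤ nH r e') :=
      ⟨Nat.find hex, Nat.find_spec hex, fun e' h => Nat.find_min hex h⟩
    have hes : e ≤ s := by
      by_contra h
      push_neg at h
      exact hemin s h (by omega)
    have hepos : 1 ≤ e := by
      rcases Nat.eq_zero_or_pos e with h0 | h
      · exfalso
        rw [h0, nH_zero] at hespec
        omega
      · exact h
    obtain ⟨e1, he1⟩ : ∃ e1, e = e1 + 1 := ⟨e - 1, by omega⟩
    have hmin1 : ¬ (khat + 1 ≤ nH r e1) := hemin e1 (by omega)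
    have hsucc : nH r e ≤ nH r e1 + 1 := by rw [he1]; exact nH_succ_le r e1
    have hne : nH r e = khat + 1 := by omega
    have hne1 : nH r e1 = khat := by omega
    have hevent : (r e).1 = (r e1).1 := by
      by_contra hno
      have heq : nH r e = nH r e1 := by
        rw [he1] at hno ⊢
        rw [nH, nH, hseq_grow, if_neg hno]
      omega
    have hrev : (r e).2 = seqH r khat := r_snd_eq r hstep e khat hne
    by_cases hti : simSeq CSH (seqH r) khat = seqH r khat
    · -- type i failure
      have hcopv : (cI r CSG CSH e).2 = simSeq CSH (seqH r) khat := by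
        rw [he1]
        cases khat with
        | zero =>
          rw [cI_snd_formula0 r CSG CSH e1 (by omega)]
          rfl
        | succ j2 =>
          have hal2 : aliveL CSH (glist (seqH r) (j2+1)) := by
            rw [alive_iff]
            refine ⟨fun jj hjj => hkhatmin jj (by omega), fun hc => ?_⟩
            exact hkhatmin j2 (by omega) (Or.inl hc)
          rw [cI_snd_formula r CSG CSH e1 j2 (by omega), if_pos hal2]
      have hSb : e ∈ Sb r CSG CSH :=
        ⟨by omega, Or.inl (by rw [hcopv, hti, ← hrev])⟩
      obtain ⟨k', hk'Sa, hk'le⟩ := hC e hSb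
      rcases Nat.lt_or_ge k' e with hlt | hge
      · have hsh : (cI r CSG CSH e).1 = (r e1).1 := by
          rw [he1]
          exact mode2G r CSG CSH e1 ⟨k', by omega, hk'Sa⟩
        have hcap : cI r CSG CSH e = r e := by
          apply Prod.ext
          · rw [hsh, hevent]
          · rw [hcopv, hti, ← hrev]
        exact (hclean e hes).1 hcap
      · have hke : k' = e := by omega
        rw [hke] at hk'Sa
        rcases hk'Sa with hSa1 | hSa2
        · exact (hclean e hes).1 (Prod.ext hSa1 (by rw [hcopv, hti, ← hrev]))
        · have hnal : ¬ aliveL CSH (glist (seqH r) (khat+1)) :=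
            not_alive_of_failI CSH (seqH r) hti
          have hc2 : (cI r CSG CSH (e+1)).2 = seqH r khat := by
            rw [cI_snd_formula r CSG CSH e khat hne, if_neg hnal]
          exact (hclean e hes).2 (Prod.ext hSa2 (by rw [hc2, ← hrev]))
    · -- type ii failure
      have htii : simSeq CSH (seqH r) (khat+1) = seqH r khat := by
        rcases hkhatspec with h | h
        · exact absurd h hti
        · exact h
      have hal : aliveL CSH (glist (seqH r) (khat+1)) := by
        rw [alive_iff]
        exact ⟨fun jj hjj => hkhatmin jj (by omega), hti⟩
      have hc2 : (cI r CSG CSH (e+1)).2 = seqH r khat := by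
        rw [cI_snd_formula r CSG CSH e khat hne, if_pos hal, htii]
      have hSb : e ∈ Sb r CSG CSH := ⟨by omega, Or.inr (by rw [hc2, ← hrev])⟩
      obtain ⟨k', hk'Sa, hk'le⟩ := hC e hSb
      have hsh : (cI r CSG CSH (e+1)).1 = (r e).1 :=
        mode2G r CSG CSH e ⟨k', hk'le, hk'Sa⟩
      exact (hclean e hes).2 (Prod.ext hsh (by rw [hc2, ← hrev]))

lemma mainG (hC : ∀ e ∈ Sa r CSG CSH, ∃ k' ∈ Sb r CSG CSH, k' ≤ e) (s : ℕ)
    (hclean : ∀ kk ≤ s, cI r CSG CSH kk ≠ r kk ∧ cI r CSG CSH (kk+1) ≠ r kk) :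
    Damages CSG (mkRob G (seqG r)) ((r s).1) := by
  obtain ⟨j, hns⟩ : ∃ j, nG r s = j + 1 := ⟨nG r s - 1, by have := nG_pos r s; omega⟩
  have hsv : (r s).1 = seqG r j := r_fst_eq r s j hns
  rw [hsv]
  have hlegG : ∀ i, seqG r (i+1) = seqG r i ∨ G.Adj (seqG r i) (seqG r (i+1)) :=
    seqG_leg r hstep
  refine ⟨j, robPos_mkRob CSG G (seqG r) hlegG j, ?_⟩
  intro kk hkk
  simp only [copPos_mkRob CSG G (seqG r) hlegG, robPos_mkRob CSG G (seqG r) hlegG]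
  by_contra hcon
  have hkkfail : failP CSG (seqG r) kk := by
    rw [failP]
    by_contra hno
    push_neg at hno
    exact hcon ⟨hno.1, hno.2⟩
  have hfail : ∃ i, failP CSG (seqG r) i := ⟨kk, hkkfail⟩
  obtain ⟨khat, hkhatspec, hkhatmin⟩ :
      ∃ i, failP CSG (seqG r) i ∧ ∀ i' < i, ¬ failP CSG (seqG r) i' :=
    ⟨Nat.find hfail, Nat.find_spec hfail, fun i' h => Nat.find_min hfail h⟩
  have hkhatle : khat ≤ j := by
    have : khat ≤ kk := by
      by_contra h
      push_neg at h
      exact hkhatmin kk h hkkfail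
    omega
  have hex : ∃ kr, khat + 1 ≤ nG r kr := ⟨s, by omega⟩
  obtain ⟨e, hespec, hemin⟩ :
      ∃ e, (khat + 1 ≤ nG r e) ∧ ∀ e' < e, ¬ (khat + 1 ≤ nG r e') :=
    ⟨Nat.find hex, Nat.find_spec hex, fun e' h => Nat.find_min hex h⟩
  have hes : e ≤ s := by
    by_contra h
    push_neg at h
    exact hemin s h (by omega)
  rcases Nat.eq_zero_or_pos e with he0 | hepos
  · -- e = 0 : failure at simulation index 0
    rw [he0, nG_zero] at hespec
    have hk0 : khat = 0 := by omega
    rw [hk0] at hkhatspec hkhatmin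
    have h00 : (cI r CSG CSH 0).1 = simSeq CSG (seqG r) 0 := rfl
    have h01 : (r 0).1 = seqG r 0 := rfl
    by_cases hti : simSeq CSG (seqG r) 0 = seqG r 0
    · have hSa : (0 : ℕ) ∈ Sa r CSG CSH := Or.inl (by rw [h00, h01, hti])
      obtain ⟨k', hk'Sb, hk'le⟩ := hC 0 hSa
      have : k' = 0 := by omega
      rw [this] at hk'Sb
      have := hk'Sb.1
      rw [nH_zero] at this
      omega
    · have htii : simSeq CSG (seqG r) 1 = seqG r 0 := by
        rcases hkhatspec with h | h
        · exact absurd h hti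
        · exact h
      have hal : aliveL CSG (glist (seqG r) 1) := by
        rw [alive_iff]
        exact ⟨fun jj hjj => by omega, hti⟩
      have hc1 : (cI r CSG CSH 1).1 = seqG r 0 := by
        rw [cI_fst_formula r CSG CSH 0 0 (nG_zero r), if_pos hal, htii]
      have hSa : (0 : ℕ) ∈ Sa r CSG CSH := Or.inr (by rw [hc1, h01])
      obtain ⟨k', hk'Sb, hk'le⟩ := hC 0 hSa
      have : k' = 0 := by omega
      rw [this] at hk'Sb
      have := hk'Sb.1
      rw [nH_zero] at this
      omega
  · obtain ⟨e1, he1⟩ : ∃ e1, e = e1 + 1 := ⟨e - 1, by omega⟩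
    have hmin1 : ¬ (khat + 1 ≤ nG r e1) := hemin e1 (by omega)
    have hsucc : nG r e ≤ nG r e1 + 1 := by rw [he1]; exact nG_succ_le r e1
    have hne : nG r e = khat + 1 := by omega
    have hne1 : nG r e1 = khat := by omega
    have hkpos : 1 ≤ khat := by
      have := nG_pos r e1
      omega
    have hevent : (r e).1 ≠ (r e1).1 := by
      intro hno
      have heq : nG r e = nG r e1 := by
        rw [he1] at hno ⊢
        rw [nG, nG, gseq_grow, if_pos hno]
      omega
    have hrev : (r e).1 = seqG r khat := r_fst_eq r e khat hne
    have hbeta : (r e).2 = (r e1).2 := by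
      rw [he1] at hevent ⊢
      exact (step_g r hstep hevent).2
    by_cases hti : simSeq CSG (seqG r) khat = seqG r khat
    · -- type i failure
      obtain ⟨j2, hj2⟩ : ∃ j2, khat = j2 + 1 := ⟨khat - 1, by omega⟩
      have hcopv : (cI r CSG CSH e).1 = simSeq CSG (seqG r) khat := by
        rw [he1]
        have hal2 : aliveL CSG (glist (seqG r) (j2+1)) := by
          rw [alive_iff]
          refine ⟨fun jj hjj => hkhatmin jj (by omega), fun hc => ?_⟩
          exact hkhatmin j2 (by omega) (Or.inl hc)
        rw [cI_fst_formula r CSG CSH e1 j2 (by omega), if_pos hal2, hj2]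
      have hSa : e ∈ Sa r CSG CSH := Or.inl (by rw [hcopv, hti, ← hrev])
      obtain ⟨k', hk'Sb, hk'le⟩ := hC e hSa
      rcases Nat.lt_or_ge k' e with hlt | hge
      · have hsh : (cI r CSG CSH e).2 = (r e1).2 := by
          rw [he1]
          exact mode2H r CSG CSH hstep e1 ⟨k', by omega, hk'Sb⟩
        have hcap : cI r CSG CSH e = r e := by
          apply Prod.ext
          · rw [hcopv, hti, ← hrev]
          · rw [hsh, hbeta]
        exact (hclean e hes).1 hcap
      · have hke : k' = e := by omega
        rw [hke] at hk'Sb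
        rcases hk'Sb.2 with hSb1 | hSb2
        · exact (hclean e hes).1 (Prod.ext (by rw [hcopv, hti, ← hrev]) hSb1)
        · have hnal : ¬ aliveL CSG (glist (seqG r) (khat+1)) :=
            not_alive_of_failI CSG (seqG r) hti
          have hc2 : (cI r CSG CSH (e+1)).1 = seqG r khat := by
            rw [cI_fst_formula r CSG CSH e khat hne, if_neg hnal]
          exact (hclean e hes).2 (Prod.ext (by rw [hc2, ← hrev]) hSb2)
    · -- type ii failure
      have htii : simSeq CSG (seqG r) (khat+1) = seqG r khat := by
        rcases hkhatspec with h | h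
        · exact absurd h hti
        · exact h
      have hal : aliveL CSG (glist (seqG r) (khat+1)) := by
        rw [alive_iff]
        exact ⟨fun jj hjj => hkhatmin jj (by omega), hti⟩
      have hc2 : (cI r CSG CSH (e+1)).1 = seqG r khat := by
        rw [cI_fst_formula r CSG CSH e khat hne, if_pos hal, htii]
      have hSa : e ∈ Sa r CSG CSH := Or.inr (by rw [hc2, ← hrev])
      obtain ⟨k', hk'Sb, hk'le⟩ := hC e hSa
      have hsh : (cI r CSG CSH (e+1)).2 = (r e).2 :=
        mode2H r CSG CSH hstep e ⟨k', hk'le, hk'Sb⟩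
      exact (hclean e hes).2 (Prod.ext (by rw [hc2, ← hrev]) hsh)

end WithStepH

end Analysis

end Product

section Counting
variable {α β : Type*}

lemma ncard_prod (s : Set α) (t : Set β) : (s ×ˢ t).ncard = s.ncard * t.ncard := by
  rw [← Nat.card_coe_set_eq, ← Nat.card_coe_set_eq, ← Nat.card_coe_set_eq,
    Nat.card_congr (Equiv.Set.prod s t), Nat.card_prod]

end Counting

section Final
variable {α β : Type*} [Inhabited α] [Inhabited β] [Fintype α] [Fintype β]

lemma dmg_attained {V : Type*} [Inhabited V] [Fintype V] (G : SimpleGraph V) :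
    ∃ CS : CopStrategy V, CS.Legal G ∧
      ∀ RS : RobberStrategy V, RS.Legal G → (damageSet CS RS).ncard ≤ dmg G := by
  have hne : { n | ∃ CS : CopStrategy V, CS.Legal G ∧
      ∀ RS : RobberStrategy V, RS.Legal G → (damageSet CS RS).ncard ≤ n }.Nonempty := by
    refine ⟨Fintype.card V, ⟨⟨default, fun ch _ => ch.headI⟩, ?_, ?_⟩⟩
    · intro c ch rh
      exact Or.inl rfl
    · intro RS _
      refine le_trans (Set.ncard_le_ncard (Set.subset_univ _) Set.finite_univ) ?_
      rw [Set.ncard_univ, Nat.card_eq_fintype_card]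
  exact Nat.sInf_mem hne

lemma prod_bound {G : SimpleGraph α} {H : SimpleGraph β}
    {CSG : CopStrategy α} {CSH : CopStrategy β}
    (hCSG : CSG.Legal G) (hCSH : CSH.Legal H) {A B : ℕ}
    (hA : ∀ RSg : RobberStrategy α, RSg.Legal G → (damageSet CSG RSg).ncard ≤ A)
    (hB : ∀ RSh : RobberStrategy β, RSh.Legal H → (damageSet CSH RSh).ncard ≤ B)
    (RS : RobberStrategy (α × β)) (hRS : RS.Legal (G □ H)) :
    (damageSet (prodCS G H CSG CSH) RS).ncard ≤
      max (A * Fintype.card β) ((B + 1) * Fintype.card α) := by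
  set r := robPos (prodCS G H CSG CSH) RS with hr
  have hstep : ∀ k, r (k+1) = r k ∨ (G □ H).Adj (r k) (r (k+1)) :=
    fun k => robStep RS (prodCS G H CSG CSH) hRS k
  have hbr := copPos_eq_cI CSG CSH RS hCSG hCSH hRS
  have hdam : ∀ v, v ∈ damageSet (prodCS G H CSG CSH) RS →
      ∃ s, r s = v ∧ ∀ kk ≤ s, cI r CSG CSH kk ≠ r kk ∧ cI r CSG CSH (kk+1) ≠ r kk := by
    intro v hv
    obtain ⟨s, hs1, hs2⟩ := hv
    refine ⟨s, hs1, fun kk hkk => ?_⟩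
    have h2 := hs2 kk hkk
    rw [hbr kk, hbr (kk+1)] at h2
    exact h2
  by_cases hc : ∀ e ∈ Sb r CSG CSH, ∃ k' ∈ Sa r CSG CSH, k' ≤ e
  · -- H-side bound
    have hsub : damageSet (prodCS G H CSG CSH) RS ⊆
        (Set.univ : Set α) ×ˢ (damageSet CSH (mkRob H (seqH r)) ∪ {(r 0).2}) := by
      intro v hv
      obtain ⟨s, hs1, hclean⟩ := hdam v hv
      refine Set.mem_prod.mpr ⟨trivial, ?_⟩
      rcases mainH r CSG CSH hstep hc s hclean with h | h
      · right
        exact Set.mem_singleton_iff.mpr (by rw [← hs1]; exact h)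
      · left
        rw [← hs1]
        exact h
    calc (damageSet (prodCS G H CSG CSH) RS).ncard
        ≤ ((Set.univ : Set α) ×ˢ (damageSet CSH (mkRob H (seqH r)) ∪ {(r 0).2})).ncard :=
          Set.ncard_le_ncard hsub (Set.toFinite _)
      _ = Fintype.card α * (damageSet CSH (mkRob H (seqH r)) ∪ {(r 0).2}).ncard := by
          rw [ncard_prod, Set.ncard_univ, Nat.card_eq_fintype_card]
      _ ≤ Fintype.card α * (B + 1) := by
          apply mul_le_mul_right
          refine le_trans (Set.ncard_union_le _ _) ?_
          rw [Set.ncard_singleton]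
          exact Nat.add_le_add_right (hB _ (mkRob_legal H (seqH r))) 1
      _ = (B + 1) * Fintype.card α := Nat.mul_comm _ _
      _ ≤ max (A * Fintype.card β) ((B + 1) * Fintype.card α) := le_max_right _ _
  · -- G-side bound
    push_neg at hc
    obtain ⟨e0, he0Sb, he0⟩ := hc
    have hC : ∀ e ∈ Sa r CSG CSH, ∃ k' ∈ Sb r CSG CSH, k' ≤ e := by
      intro e he
      refine ⟨e0, he0Sb, ?_⟩
      have := he0 e he
      omega
    have hsub : damageSet (prodCS G H CSG CSH) RS ⊆
        (damageSet CSG (mkRob G (seqG r))) ×ˢ (Set.univ : Set β) := by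
      intro v hv
      obtain ⟨s, hs1, hclean⟩ := hdam v hv
      refine Set.mem_prod.mpr ⟨?_, trivial⟩
      rw [← hs1]
      exact mainG r CSG CSH hstep hC s hclean
    calc (damageSet (prodCS G H CSG CSH) RS).ncard
        ≤ ((damageSet CSG (mkRob G (seqG r))) ×ˢ (Set.univ : Set β)).ncard :=
          Set.ncard_le_ncard hsub (Set.toFinite _)
      _ = (damageSet CSG (mkRob G (seqG r))).ncard * Fintype.card β := by
          rw [ncard_prod, Set.ncard_univ, Nat.card_eq_fintype_card]
      _ ≤ A * Fintype.card β :=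
          Nat.mul_le_mul_right _ (hA _ (mkRob_legal G (seqG r)))
      _ ≤ max (A * Fintype.card β) ((B + 1) * Fintype.card α) := le_max_left _ _

end Final

end BoxDmg

/-- For any finite connected graphs `G` and `H`,
`dmg(G □ H) ≤ max {dmg(G)·|V(H)|, (dmg(H)+1)·|V(G)|}`. -/
theorem dmg_boxProd_le_max' {α β : Type*} [Fintype α] [Fintype β]
    (G : SimpleGraph α) (H : SimpleGraph β) (hG : G.Connected) (hH : H.Connected) :
    dmg (G □ H) ≤ max (dmg G * Fintype.card β) ((dmg H + 1) * Fintype.card α) := by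
  have hne1 : Nonempty α := hG.nonempty
  have hne2 : Nonempty β := hH.nonempty
  letI : Inhabited α := Classical.inhabited_of_nonempty hne1
  letI : Inhabited β := Classical.inhabited_of_nonempty hne2
  obtain ⟨CSG, hCSG, hA⟩ := BoxDmg.dmg_attained G
  obtain ⟨CSH, hCSH, hB⟩ := BoxDmg.dmg_attained H
  exact Nat.sInf_le ⟨BoxDmg.prodCS G H CSG CSH, BoxDmg.prodCS_legal G H CSG CSH,
    fun RS hRS => BoxDmg.prod_bound hCSG hCSH hA hB RS hRS⟩
end
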